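/- arXiv:1212.0834 — 14 statements merged into one kernel-verified Lean document; each statement's English description precedes it below -/
import Mathlib

section
/- Comparison principle for uniformly elliptic PDEs on graphs: Let G be a finite weighted directed graph with nonempty boundary ∂V which is connected to the boundary, and let F be a uniformly elliptic PDE on G. If u, v : V → ℝ satisfy F(u)(x) ≥ F(v)(x) for all x ∈ V, then u(x) ≤ v(x) for all x ∈ V. -/
/-!
STATEMENT 0: Comparison principle for uniformly elliptic PDEs on a finite
weighted directed graph which is connected to its (nonempty) boundary.

The graph is given by a finite vertex type `V`, an edge relation `adj`
(edges join distinct vertices), positive weights `w`, and a nonempty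
boundary set `B`.  Every interior vertex has at least one neighbor.
For `u : V → ℝ` the gradient at an interior vertex `x` is the vector
(indexed by the neighbors of `x`) with components `w x y * (u y - u x)`.
A PDE `F` is given by `F u x = f x (u x) (∇u x)` at interior vertices and
`F u x = g x - u x` at boundary vertices.  Uniform ellipticity: for interior
`x`, `r ≥ s` and `p < q` (componentwise `≤` with strict inequality in some
component) imply `f x r p < f x s q`.
-/

theorem comparison_uniformly_elliptic
    {V : Type*} [Fintype V]
    (adj : V → V → Prop) (w : V → V → ℝ) (B : Set V)
    (hB : B.Nonempty)
    (hne : ∀ x y : V, adj x y → x ≠ y)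
    (hw : ∀ x y : V, adj x y → 0 < w x y)
    (hdeg : ∀ x : V, x ∉ B → ∃ y : V, adj x y)
    (hconn : ∀ x : V, ∃ y ∈ B, Relation.ReflTransGen adj x y)
    (f : (x : V) → ℝ → ({y : V // adj x y} → ℝ) → ℝ)
    (g : V → ℝ)
    (F : (V → ℝ) → V → ℝ)
    (hFint : ∀ (u : V → ℝ) (x : V), x ∉ B →
      F u x = f x (u x) (fun y => w x y.1 * (u y.1 - u x)))
    (hFbd : ∀ (u : V → ℝ) (x : V), x ∈ B → F u x = g x - u x)
    (hUE : ∀ x : V, x ∉ B → ∀ (r s : ℝ) (p q : {y : V // adj x y} → ℝ),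
      s ≤ r → p ≤ q → (∃ i, p i < q i) → f x r p < f x s q)
    (u v : V → ℝ)
    (h : ∀ x : V, F v x ≤ F u x) :
    ∀ x : V, u x ≤ v x := by
  by_contra hc
  push_neg at hc
  obtain ⟨x0, hx0⟩ := hc
  set φ : V → ℝ := fun x => u x - v x with hφ
  obtain ⟨z, -, hzmax⟩ :=
    Finset.exists_max_image (Finset.univ : Finset V) φ ⟨x0, Finset.mem_univ x0⟩
  set M := φ z with hM
  have hMpos : 0 < M :=
    lt_of_lt_of_le (by simp only [φ]; linarith) (hzmax x0 (Finset.mem_univ x0))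
  -- boundary vertices do not attain the positive maximum
  have hbd : ∀ x, x ∈ B → φ x ≠ M := by
    intro x hxB hxM
    have h1 := h x
    rw [hFbd u x hxB, hFbd v x hxB] at h1
    have : φ x ≤ 0 := by simp only [φ]; linarith
    linarith [hxM ▸ this]
  -- interior maximizers propagate the maximum to every neighbor
  have hint : ∀ x, φ x = M → x ∉ B → ∀ y, adj x y → φ y = M := by
    intro x hxM hxB y hxy
    by_contra hy
    have hyM : φ y < M := lt_of_le_of_ne (hzmax y (Finset.mem_univ y)) hy
    have h1 := h x
    rw [hFint u x hxB, hFint v x hxB] at h1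
    have hxuv : u x - v x = M := hxM
    have key := hUE x hxB (u x) (v x)
      (fun i => w x i.1 * (u i.1 - u x)) (fun i => w x i.1 * (v i.1 - v x))
      (by linarith)
      (fun i => by
        have hi : φ i.1 ≤ M := hzmax i.1 (Finset.mem_univ i.1)
        have hwpos := hw x i.1 i.2
        have hle : u i.1 - u x ≤ v i.1 - v x := by
          simp only [φ] at hi; linarith
        exact mul_le_mul_of_nonneg_left hle (le_of_lt hwpos))
      ⟨⟨y, hxy⟩, by
        have hwpos := hw x y hxy
        have hlt : u y - u x < v y - v x := by
          simp only [φ] at hyM; linarith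
        exact mul_lt_mul_of_pos_left hlt hwpos⟩
    linarith
  obtain ⟨b, hbB, hpath⟩ := hconn z
  have key : ∀ c, Relation.ReflTransGen adj z c → φ c = M := by
    intro c hp
    induction hp with
    | refl => rfl
    | tail hab hbc ih => exact hint _ ih (fun hB' => hbd _ hB' ih) _ hbc
  exact hbd b hbB (key b hpath)
end

section
/- Comparison principle for proper PDEs on graphs: Let G be a finite weighted directed graph with nonempty boundary ∂V which is connected to the boundary, and let F be a proper PDE on G. If u, v : V → ℝ satisfy F(u)(x) ≥ F(v)(x) for all x ∈ V, then u(x) ≤ v(x) for all x ∈ V. -/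
/-!
STATEMENT 1: Comparison principle for proper PDEs on a finite
weighted directed graph which is connected to its (nonempty) boundary.

The graph is given by a finite vertex type `V`, an edge relation `adj`
(edges join distinct vertices), positive weights `w`, and a nonempty
boundary set `B`.  Every interior vertex has at least one neighbor.
For `u : V → ℝ` the gradient at an interior vertex `x` is the vector
(indexed by the neighbors of `x`) with components `w x y * (u y - u x)`.
A PDE `F` is given by `F u x = f x (u x) (∇u x)` at interior vertices and
`F u x = g x - u x` at boundary vertices.  Properness: for interior `x`, `r > s` and `p ≤ q` imply `f x r p < f x s q`.
-/

theorem comparison_proper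
    {V : Type*} [Fintype V]
    (adj : V → V → Prop) (w : V → V → ℝ) (B : Set V)
    (hB : B.Nonempty)
    (hne : ∀ x y : V, adj x y → x ≠ y)
    (hw : ∀ x y : V, adj x y → 0 < w x y)
    (hdeg : ∀ x : V, x ∉ B → ∃ y : V, adj x y)
    (hconn : ∀ x : V, ∃ y ∈ B, Relation.ReflTransGen adj x y)
    (f : (x : V) → ℝ → ({y : V // adj x y} → ℝ) → ℝ)
    (g : V → ℝ)
    (F : (V → ℝ) → V → ℝ)
    (hFint : ∀ (u : V → ℝ) (x : V), x ∉ B →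
      F u x = f x (u x) (fun y => w x y.1 * (u y.1 - u x)))
    (hFbd : ∀ (u : V → ℝ) (x : V), x ∈ B → F u x = g x - u x)
    (hProper : ∀ x : V, x ∉ B → ∀ (r s : ℝ) (p q : {y : V // adj x y} → ℝ),
      s < r → p ≤ q → f x r p < f x s q)
    (u v : V → ℝ)
    (h : ∀ x : V, F v x ≤ F u x) :
    ∀ x : V, u x ≤ v x := by
  have hVne : Nonempty V := ⟨hB.choose⟩
  obtain ⟨x₀, -, hx₀⟩ := Finset.exists_max_image Finset.univ (fun x => u x - v x)
    ⟨Classical.arbitrary V, Finset.mem_univ _⟩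
  have hmax : ∀ y : V, u y - v y ≤ u x₀ - v x₀ := fun y => hx₀ y (Finset.mem_univ y)
  have hM : u x₀ ≤ v x₀ := by
    by_cases hb : x₀ ∈ B
    · have := h x₀
      rw [hFbd u x₀ hb, hFbd v x₀ hb] at this
      linarith
    · by_contra hlt
      push_neg at hlt
      have hle : (fun y : {y : V // adj x₀ y} => w x₀ y.1 * (u y.1 - u x₀)) ≤
          (fun y : {y : V // adj x₀ y} => w x₀ y.1 * (v y.1 - v x₀)) := by
        intro y
        show w x₀ y.1 * (u y.1 - u x₀) ≤ w x₀ y.1 * (v y.1 - v x₀)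
        have h1 := hmax y.1
        have h2 := (hw x₀ y.1 y.2).le
        nlinarith
      have hp := hProper x₀ hb (u x₀) (v x₀) _ _ hlt hle
      have := h x₀
      rw [hFint u x₀ hb, hFint v x₀ hb] at this
      linarith
  intro x
  have := hmax x
  linarith
end

section
/- Comparison principle under a condition weaker than both properness and uniform ellipticity: Let G be a finite weighted directed graph with nonempty boundary ∂V which is connected to the boundary, and let F be a PDE on G whose interior function f satisfies: for every interior vertex x, r > s and p < q imply f(x,r,p) < f(x,s,q). If u, v : V → ℝ satisfy F(u)(x) ≥ F(v)(x) for all x ∈ V, then u(x) ≤ v(x) for all x ∈ V. -/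
/-!
STATEMENT 2: Comparison principle for PDEs satisfying a condition weaker than both properness and uniform ellipticity on a finite
weighted directed graph which is connected to its (nonempty) boundary.

The graph is given by a finite vertex type `V`, an edge relation `adj`
(edges join distinct vertices), positive weights `w`, and a nonempty
boundary set `B`.  Every interior vertex has at least one neighbor.
For `u : V → ℝ` the gradient at an interior vertex `x` is the vector
(indexed by the neighbors of `x`) with components `w x y * (u y - u x)`.
A PDE `F` is given by `F u x = f x (u x) (∇u x)` at interior vertices and
`F u x = g x - u x` at boundary vertices.  Condition: for interior `x`, `r > s` and `p < q` imply `f x r p < f x s q`.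
-/

theorem comparison_weak_condition
    {V : Type*} [Fintype V]
    (adj : V → V → Prop) (w : V → V → ℝ) (B : Set V)
    (hB : B.Nonempty)
    (hne : ∀ x y : V, adj x y → x ≠ y)
    (hw : ∀ x y : V, adj x y → 0 < w x y)
    (hdeg : ∀ x : V, x ∉ B → ∃ y : V, adj x y)
    (hconn : ∀ x : V, ∃ y ∈ B, Relation.ReflTransGen adj x y)
    (f : (x : V) → ℝ → ({y : V // adj x y} → ℝ) → ℝ)
    (g : V → ℝ)
    (F : (V → ℝ) → V → ℝ)
    (hFint : ∀ (u : V → ℝ) (x : V), x ∉ B →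
      F u x = f x (u x) (fun y => w x y.1 * (u y.1 - u x)))
    (hFbd : ∀ (u : V → ℝ) (x : V), x ∈ B → F u x = g x - u x)
    (hWeak : ∀ x : V, x ∉ B → ∀ (r s : ℝ) (p q : {y : V // adj x y} → ℝ),
      s < r → p ≤ q → (∃ i, p i < q i) → f x r p < f x s q)
    (u v : V → ℝ)
    (h : ∀ x : V, F v x ≤ F u x) :
    ∀ x : V, u x ≤ v x := by

  by_contra hcon
  push_neg at hcon
  obtain ⟨x0, hx0⟩ := hcon
  -- maximizer of u - v
  have hVne : Nonempty V := ⟨x0⟩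
  obtain ⟨m, -, hm⟩ := Finset.exists_max_image (Finset.univ : Finset V)
    (fun x => u x - v x) ⟨x0, Finset.mem_univ x0⟩
  set M : ℝ := u m - v m with hM
  have hMle : ∀ x : V, u x - v x ≤ M := fun x => hm x (Finset.mem_univ x)
  have hMpos : 0 < M := lt_of_lt_of_le (by linarith) (hMle x0)
  -- boundary vertices satisfy u ≤ v
  have hbd : ∀ b : V, b ∈ B → u b ≤ v b := by
    intro b hb
    have h1 := h b
    rw [hFbd u b hb, hFbd v b hb] at h1
    linarith
  -- at an interior max vertex, all neighbors are also max
  have hint : ∀ x : V, x ∉ B → u x - v x = M → ∀ y : V, adj x y → u y - v y = M := by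
    intro x hxB hxA y hxy
    by_contra hlt
    have hylt : u y - v y < M := lt_of_le_of_ne (hMle y) hlt
    have hkey := hWeak x hxB (u x) (v x)
      (fun z => w x z.1 * (u z.1 - u x)) (fun z => w x z.1 * (v z.1 - v x))
      (by linarith) ?_ ?_
    · have h1 := h x
      rw [hFint u x hxB, hFint v x hxB] at h1
      exact absurd h1 (not_le.mpr hkey)
    · intro z
      have hwz := hw x z.1 z.2
      have : u z.1 - v z.1 ≤ u x - v x := by rw [hxA]; exact hMle z.1
      have : u z.1 - u x ≤ v z.1 - v x := by linarith
      exact mul_le_mul_of_nonneg_left this (le_of_lt hwz)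
    · refine ⟨⟨y, hxy⟩, ?_⟩
      have hwz := hw x y hxy
      have : u y - u x < v y - v x := by
        have : u y - v y < u x - v x := by rw [hxA]; exact hylt
        linarith
      exact mul_lt_mul_of_pos_left this hwz
  -- propagate max along paths to the boundary
  have hprop : ∀ x y : V, Relation.ReflTransGen adj x y → u x - v x = M → u y - v y = M := by
    intro x y hpath
    induction hpath using Relation.ReflTransGen.head_induction_on with
    | refl => exact fun hx => hx
    | head hab _ ih =>
      intro ha
      rename_i a c _
      by_cases haB : a ∈ B
      · have := hbd a haB
        linarith [hMpos, ha.symm ▸ (by linarith : u a - v a ≤ 0)]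
      · exact ih (hint a haB ha c hab)
  obtain ⟨b, hbB, hpath⟩ := hconn m
  have hbA : u b - v b = M := hprop m b hpath rfl
  have := hbd b hbB
  linarith
end

section
/- Propagation of maxima along active neighbors: Let G be a finite weighted directed graph with nonempty boundary ∂V. Suppose F(u)(x) = w₊(x)‖∇u(x)‖⁺ + H(u)(x) for interior x, where w₊(x) > 0 for all interior x and H is an elliptic PDE on G. Let u, v : V → ℝ satisfy F(u)(x) ≥ F(v)(x) for all interior x, set M = max_{x∈V}(u(x) − v(x)) and W = {x ∈ V : u(x) − v(x) = M}, and suppose M > 0. Then for every interior vertex x ∈ W and every active neighbor z of x (for u), one has z ∈ W. -/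
/-!
STATEMENT 4: Propagation of maxima along active neighbors.

`eikP adj w u x` is the positive eikonal operator
`‖∇u(x)‖⁺ = max_{y ~ x} w x y * (u y - u x)`; since the neighbor set of an
interior vertex is finite and nonempty, the supremum below is this maximum.
Suppose `F u x = w₊ x * ‖∇u(x)‖⁺ + H u x` at interior vertices, with
`w₊ > 0` on interior vertices and `H` an elliptic PDE.  If `F u ≥ F v` at all
interior vertices, `M = max (u - v) > 0` is attained and `W` is the set where
it is attained, then for any interior `x ∈ W` and any active neighbor `z` of
`x` (for `u`), also `z ∈ W`.
-/

/-- The positive eikonal operator `‖∇u(x)‖⁺` on a weighted directed graph. -/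
noncomputable def eikP {V : Type*} (adj : V → V → Prop) (w : V → V → ℝ)
    (u : V → ℝ) (x : V) : ℝ :=
  sSup (Set.range fun y : {y : V // adj x y} => w x y.1 * (u y.1 - u x))

theorem propagation_of_maxima
    {V : Type*} [Fintype V]
    (adj : V → V → Prop) (w : V → V → ℝ) (B : Set V)
    (hB : B.Nonempty)
    (hne : ∀ x y : V, adj x y → x ≠ y)
    (hw : ∀ x y : V, adj x y → 0 < w x y)
    (hdeg : ∀ x : V, x ∉ B → ∃ y : V, adj x y)
    (h : (x : V) → ℝ → ({y : V // adj x y} → ℝ) → ℝ)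
    (g : V → ℝ)
    (H : (V → ℝ) → V → ℝ)
    (hHint : ∀ (u : V → ℝ) (x : V), x ∉ B →
      H u x = h x (u x) (fun y => w x y.1 * (u y.1 - u x)))
    (hHbd : ∀ (u : V → ℝ) (x : V), x ∈ B → H u x = g x - u x)
    (hHell : ∀ x : V, x ∉ B → ∀ (r s : ℝ) (p q : {y : V // adj x y} → ℝ),
      s ≤ r → p ≤ q → h x r p ≤ h x s q)
    (wp : V → ℝ) (hwp : ∀ x : V, x ∉ B → 0 < wp x)
    (F : (V → ℝ) → V → ℝ)
    (hF : ∀ (u : V → ℝ) (x : V), x ∉ B →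
      F u x = wp x * eikP adj w u x + H u x)
    (u v : V → ℝ)
    (hcomp : ∀ x : V, x ∉ B → F v x ≤ F u x)
    (M : ℝ) (hM : IsGreatest (Set.range fun x : V => u x - v x) M)
    (hMpos : 0 < M)
    (x : V) (hx : x ∉ B) (hxW : u x - v x = M)
    (z : V) (hz : adj x z)
    (hact : w x z * (u z - u x) = eikP adj w u x) :
    u z - v z = M := by
  classical
  have hxMem : ∀ y : V, u y - v y ≤ M := fun y => hM.2 ⟨y, rfl⟩
  have hkey : ∀ y : V, u y - u x ≤ v y - v x := by
    intro y; have := hxMem y; linarith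
  have hvx : v x ≤ u x := by linarith
  have hneU : (Set.range fun y : {y : V // adj x y} => w x y.1 * (u y.1 - u x)).Nonempty :=
    ⟨_, ⟨⟨z, hz⟩, rfl⟩⟩
  have hbdV : BddAbove (Set.range fun y : {y : V // adj x y} => w x y.1 * (v y.1 - v x)) :=
    (Set.finite_range _).bddAbove
  have hbdU : BddAbove (Set.range fun y : {y : V // adj x y} => w x y.1 * (u y.1 - u x)) :=
    (Set.finite_range _).bddAbove
  have h1 : eikP adj w u x ≤ eikP adj w v x := by
    apply csSup_le hneU
    rintro a ⟨y, rfl⟩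
    calc w x y.1 * (u y.1 - u x) ≤ w x y.1 * (v y.1 - v x) :=
          mul_le_mul_of_nonneg_left (hkey y.1) (hw x y.1 y.2).le
      _ ≤ eikP adj w v x := le_csSup hbdV ⟨y, rfl⟩
  have hH : H u x ≤ H v x := by
    rw [hHint u x hx, hHint v x hx]
    exact hHell x hx (u x) (v x) _ _ hvx
      (fun y => mul_le_mul_of_nonneg_left (hkey y.1) (hw x y.1 y.2).le)
  have hcx := hcomp x hx
  rw [hF u x hx, hF v x hx] at hcx
  have h2 : eikP adj w v x ≤ eikP adj w u x := by
    have hwpx := hwp x hx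
    nlinarith
  have heq : eikP adj w u x = eikP adj w v x := le_antisymm h1 h2
  have h3 : w x z * (v z - v x) ≤ eikP adj w v x :=
    le_csSup hbdV ⟨⟨z, hz⟩, rfl⟩
  have h4 : w x z * (u z - u x) ≤ w x z * (v z - v x) :=
    mul_le_mul_of_nonneg_left (hkey z) (hw x z hz).le
  have h5 : w x z * (u z - u x) = w x z * (v z - v x) := by
    rw [hact, heq]; exact le_antisymm (heq ▸ hact ▸ h4) h3
  have h6 : u z - u x = v z - v x :=
    mul_left_cancel₀ (ne_of_gt (hw x z hz)) h5
  linarith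
end

section
/- Comparison (uniqueness) for positive eikonal equations: Let G be a finite weighted directed graph with nonempty boundary ∂V which is connected to the boundary, and let F be a positive eikonal equation on G. If u, v : V → ℝ satisfy F(u)(x) = F(v)(x) = 0 for all interior x, and u(x) ≤ v(x) for all x ∈ ∂V, then u(x) ≤ v(x) for all x ∈ V. -/
theorem eikonal_comparison
    {V : Type*} [Fintype V]
    (adj : V → V → Prop) (w : V → V → ℝ) (B : Set V)
    (hB : B.Nonempty)
    (hne : ∀ x y : V, adj x y → x ≠ y)
    (hw : ∀ x y : V, adj x y → 0 < w x y)
    (hdeg : ∀ x : V, x ∉ B → ∃ y : V, adj x y)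
    (hconn : ∀ x : V, ∃ y ∈ B, Relation.ReflTransGen adj x y)
    (f : (x : V) → ({y : V // adj x y} → ℝ) → ℝ)
    (hell : ∀ x : V, x ∉ B → ∀ p q : {y : V // adj x y} → ℝ,
      p ≤ q → f x p ≤ f x q)
    (w0 : V → ℝ) (hw0 : ∀ x : V, x ∉ B → 0 ≤ w0 x)
    (hhom : ∀ (x : V), x ∉ B → ∀ p : {y : V // adj x y} → ℝ,
      w0 x * sInf (Set.range p) ≤ f x p ∧ f x p ≤ w0 x * sSup (Set.range p))
    (wp g : V → ℝ)
    (hwp : ∀ x : V, x ∉ B → 0 < wp x)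
    (hg : ∀ x : V, x ∉ B → 0 < g x)
    (F : (V → ℝ) → V → ℝ)
    (hF : ∀ (u : V → ℝ) (x : V), x ∉ B →
      F u x = wp x * eikP adj w u x
        + f x (fun y => w x y.1 * (u y.1 - u x)) - g x)
    (u v : V → ℝ)
    (hu : ∀ x : V, x ∉ B → F u x = 0)
    (hv : ∀ x : V, x ∉ B → F v x = 0)
    (hbd : ∀ x ∈ B, u x ≤ v x) :
    ∀ x : V, u x ≤ v x := by
  classical
  by_contra hcon
  push_neg at hcon
  have hVne : Nonempty V := ⟨hB.choose⟩
  set φ : V → ℝ := fun z => u z - v z with hφ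
  obtain ⟨x0, _, hx0⟩ := Finset.exists_max_image Finset.univ φ
    ⟨Classical.arbitrary V, Finset.mem_univ _⟩
  set M : ℝ := φ x0 with hM
  have hx0' : ∀ z : V, φ z ≤ M := fun z => hx0 z (Finset.mem_univ z)
  have hMpos : 0 < M := by
    obtain ⟨z, hz⟩ := hcon
    have := hx0' z
    simp only [hφ] at this ⊢
    linarith
  -- The set of maximizers of φ
  set A : Finset V := Finset.univ.filter (fun z => φ z = M) with hA
  have hAne : A.Nonempty := ⟨x0, by simp [hA, hM]⟩
  obtain ⟨x, hxA, hxmax⟩ := Finset.exists_max_image A u hAne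
  have hxM : φ x = M := by
    have := hxA; simp [hA] at this; exact this
  have hxB : x ∉ B := by
    intro hxB
    have := hbd x hxB
    simp only [hφ] at hxM
    linarith
  -- Neighbor structure at x
  haveI hNne : Nonempty {y : V // adj x y} := by
    obtain ⟨y, hy⟩ := hdeg x hxB
    exact ⟨⟨y, hy⟩⟩
  set pu : {y : V // adj x y} → ℝ := fun y => w x y.1 * (u y.1 - u x) with hpu
  set pv : {y : V // adj x y} → ℝ := fun y => w x y.1 * (v y.1 - v x) with hpv
  have hle : pu ≤ pv := by
    intro y
    have h1 : φ y.1 ≤ M := hx0' y.1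
    have h2 : u y.1 - u x ≤ v y.1 - v x := by
      simp only [hφ] at h1 hxM; linarith
    exact mul_le_mul_of_nonneg_left h2 (hw x y.1 y.2).le
  have hfinu : (Set.range pu).Finite := Set.finite_range pu
  have hfinv : (Set.range pv).Finite := Set.finite_range pv
  set Eu : ℝ := sSup (Set.range pu) with hEu
  set Ev : ℝ := sSup (Set.range pv) with hEv
  have hEuEv : Eu ≤ Ev := by
    apply csSup_le (Set.range_nonempty pu)
    rintro _ ⟨y, rfl⟩
    exact le_trans (hle y) (le_csSup hfinv.bddAbove ⟨y, rfl⟩)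
  have hEuu : eikP adj w u x = Eu := rfl
  have hEvv : eikP adj w v x = Ev := rfl
  have hfle : f x pu ≤ f x pv := hell x hxB pu pv hle
  -- Equations
  have equ : wp x * Eu + f x pu - g x = 0 := by
    have := hu x hxB; rw [hF u x hxB] at this; exact this
  have eqv : wp x * Ev + f x pv - g x = 0 := by
    have := hv x hxB; rw [hF v x hxB] at this; exact this
  have hwpx := hwp x hxB
  have hEuEv' : Eu = Ev := by nlinarith
  -- Positivity of Eu
  have hfup : f x pu ≤ w0 x * Eu := (hhom x hxB pu).2
  have hEupos : 0 < Eu := by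
    have hgx := hg x hxB
    have hw0x := hw0 x hxB
    nlinarith
  -- The sup is attained
  have hmem : Eu ∈ Set.range pu :=
    (Set.range_nonempty pu).csSup_mem hfinu
  obtain ⟨y, hy⟩ := hmem
  have hwy := hw x y.1 y.2
  have huy : u x < u y.1 := by
    have h0 : 0 < pu y := by rw [hy]; exact hEupos
    simp only [hpu] at h0
    nlinarith
  have hpvy : pv y ≤ Ev := le_csSup hfinv.bddAbove ⟨y, rfl⟩
  have heq : pu y = pv y := le_antisymm (hle y) (by rw [hy, hEuEv']; exact hpvy)
  have hcancel : u y.1 - u x = v y.1 - v x :=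
    mul_left_cancel₀ (ne_of_gt hwy) heq
  have hyA : y.1 ∈ A := by
    simp only [hA, Finset.mem_filter, Finset.mem_univ, true_and, hφ]
    simp only [hφ] at hxM
    linarith
  have := hxmax y.1 hyA
  linarith
end

section
/- Harnack-type lemma for p-harmonious equations: Let G be a finite weighted directed graph, let F be a p-harmonious equation on G, and let x be an interior vertex. If u : V → ℝ satisfies F(u)(x) = 0, then either ‖∇u(x)‖⁻ < 0 < ‖∇u(x)‖⁺ (equivalently, min_i u(y_i) < u(x) < max_i u(y_i) over the neighbors y_i of x), or ∇u(x) is the zero vector. -/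
/-- The negative eikonal operator `‖∇u(x)‖⁻` on a weighted directed graph. -/
noncomputable def eikM {V : Type*} (adj : V → V → Prop) (w : V → V → ℝ)
    (u : V → ℝ) (x : V) : ℝ :=
  sInf (Set.range fun y : {y : V // adj x y} => w x y.1 * (u y.1 - u x))

theorem harnack_p_harmonious
    {V : Type*} [Fintype V]
    (adj : V → V → Prop) (w : V → V → ℝ) (B : Set V)
    (hB : B.Nonempty)
    (hne : ∀ x y : V, adj x y → x ≠ y)
    (hw : ∀ x y : V, adj x y → 0 < w x y)
    (hdeg : ∀ x : V, x ∉ B → ∃ y : V, adj x y)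
    (f : (x : V) → ({y : V // adj x y} → ℝ) → ℝ)
    (hell : ∀ x : V, x ∉ B → ∀ p q : {y : V // adj x y} → ℝ,
      p ≤ q → f x p ≤ f x q)
    (w0 : V → ℝ) (hw0 : ∀ x : V, x ∉ B → 0 ≤ w0 x)
    (hhom : ∀ (x : V), x ∉ B → ∀ p : {y : V // adj x y} → ℝ,
      w0 x * sInf (Set.range p) ≤ f x p ∧ f x p ≤ w0 x * sSup (Set.range p))
    (wp wm : V → ℝ)
    (hwp : ∀ x : V, x ∉ B → 0 < wp x)
    (hwm : ∀ x : V, x ∉ B → 0 < wm x)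
    (F : (V → ℝ) → V → ℝ)
    (hF : ∀ (u : V → ℝ) (x : V), x ∉ B →
      F u x = wp x * eikP adj w u x + wm x * eikM adj w u x
        + f x (fun y => w x y.1 * (u y.1 - u x)))
    (u : V → ℝ) (x : V) (hx : x ∉ B)
    (hsol : F u x = 0) :
    (eikM adj w u x < 0 ∧ 0 < eikP adj w u x) ∨
      (∀ y : V, adj x y → w x y * (u y - u x) = 0) := by
  classical
  set p : {y : V // adj x y} → ℝ := fun y => w x y.1 * (u y.1 - u x) with hp
  have hNe : Nonempty {y : V // adj x y} := by
    obtain ⟨y, hy⟩ := hdeg x hx; exact ⟨⟨y, hy⟩⟩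
  have hfin : (Set.range p).Finite := Set.finite_range p
  have hnon : (Set.range p).Nonempty := Set.range_nonempty p
  set M := sSup (Set.range p) with hM
  set m := sInf (Set.range p) with hm
  have hle : ∀ y, m ≤ p y ∧ p y ≤ M := fun y =>
    ⟨csInf_le hfin.bddBelow ⟨y, rfl⟩, le_csSup hfin.bddAbove ⟨y, rfl⟩⟩
  have hmM : m ≤ M := le_trans (hle hNe.some).1 (hle hNe.some).2
  have heikP : eikP adj w u x = M := rfl
  have heikM : eikM adj w u x = m := rfl
  have heq : wp x * M + wm x * m + f x p = 0 := by
    have h := hF u x hx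
    rw [hsol, heikP, heikM] at h
    linarith [h.symm.le, h.symm.ge]
  obtain ⟨hf1, hf2⟩ := hhom x hx p
  rw [← hm] at hf1
  rw [← hM] at hf2
  have hwpx := hwp x hx
  have hwmx := hwm x hx
  have hw0x := hw0 x hx
  by_cases hcase : m < 0 ∧ 0 < M
  · exact Or.inl ⟨hcase.1, hcase.2⟩
  · right
    push_neg at hcase
    have hzero : m = 0 ∧ M = 0 := by
      rcases lt_or_ge m 0 with h1 | h1
      · have hM0 : M ≤ 0 := hcase h1
        constructor <;> nlinarith [mul_nonneg hw0x (neg_nonneg.mpr hM0)]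
      · have hf0 : 0 ≤ f x p := le_trans (mul_nonneg hw0x h1) hf1
        constructor <;> nlinarith
    intro y hy
    have h1 := (hle ⟨y, hy⟩).1
    have h2 := (hle ⟨y, hy⟩).2
    rw [hzero.1] at h1; rw [hzero.2] at h2
    exact le_antisymm h2 h1
end

section
/- Comparison (uniqueness) for p-harmonious equations: Let G be a finite weighted directed graph with nonempty boundary ∂V which is connected to the boundary, and let F be a p-harmonious equation on G. If u, v : V → ℝ satisfy F(u)(x) = F(v)(x) = 0 for all interior x, and u(x) ≤ v(x) for all x ∈ ∂V, then u(x) ≤ v(x) for all x ∈ V. -/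
lemma rsup_mem {ι : Type*} [Finite ι] [Nonempty ι] (p : ι → ℝ) :
    ∃ i, sSup (Set.range p) = p i := by
  obtain ⟨i, hi⟩ := (Set.range_nonempty p).csSup_mem (Set.finite_range p)
  exact ⟨i, hi.symm⟩

lemma rinf_mem {ι : Type*} [Finite ι] [Nonempty ι] (p : ι → ℝ) :
    ∃ i, sInf (Set.range p) = p i := by
  obtain ⟨i, hi⟩ := (Set.range_nonempty p).csInf_mem (Set.finite_range p)
  exact ⟨i, hi.symm⟩

lemma le_rsup {ι : Type*} [Finite ι] (p : ι → ℝ) (i : ι) :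
    p i ≤ sSup (Set.range p) :=
  le_csSup (Set.finite_range p).bddAbove ⟨i, rfl⟩

lemma rinf_le {ι : Type*} [Finite ι] (p : ι → ℝ) (i : ι) :
    sInf (Set.range p) ≤ p i :=
  csInf_le (Set.finite_range p).bddBelow ⟨i, rfl⟩

lemma rsup_mono {ι : Type*} [Finite ι] [Nonempty ι] {p q : ι → ℝ} (h : p ≤ q) :
    sSup (Set.range p) ≤ sSup (Set.range q) := by
  obtain ⟨i, hi⟩ := rsup_mem p
  exact hi ▸ le_trans (h i) (le_rsup q i)

lemma rinf_mono {ι : Type*} [Finite ι] [Nonempty ι] {p q : ι → ℝ} (h : p ≤ q) :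
    sInf (Set.range p) ≤ sInf (Set.range q) := by
  obtain ⟨i, hi⟩ := rinf_mem q
  exact hi ▸ le_trans (rinf_le p i) (h i)

theorem p_harmonious_comparison
    {V : Type*} [Fintype V]
    (adj : V → V → Prop) (w : V → V → ℝ) (B : Set V)
    (hB : B.Nonempty)
    (hne : ∀ x y : V, adj x y → x ≠ y)
    (hw : ∀ x y : V, adj x y → 0 < w x y)
    (hdeg : ∀ x : V, x ∉ B → ∃ y : V, adj x y)
    (hconn : ∀ x : V, ∃ y ∈ B, Relation.ReflTransGen adj x y)
    (f : (x : V) → ({y : V // adj x y} → ℝ) → ℝ)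
    (hell : ∀ x : V, x ∉ B → ∀ p q : {y : V // adj x y} → ℝ,
      p ≤ q → f x p ≤ f x q)
    (w0 : V → ℝ) (hw0 : ∀ x : V, x ∉ B → 0 ≤ w0 x)
    (hhom : ∀ (x : V), x ∉ B → ∀ p : {y : V // adj x y} → ℝ,
      w0 x * sInf (Set.range p) ≤ f x p ∧ f x p ≤ w0 x * sSup (Set.range p))
    (wp wm : V → ℝ)
    (hwp : ∀ x : V, x ∉ B → 0 < wp x)
    (hwm : ∀ x : V, x ∉ B → 0 < wm x)
    (F : (V → ℝ) → V → ℝ)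
    (hF : ∀ (u : V → ℝ) (x : V), x ∉ B →
      F u x = wp x * eikP adj w u x + wm x * eikM adj w u x
        + f x (fun y => w x y.1 * (u y.1 - u x)))
    (u v : V → ℝ)
    (hu : ∀ x : V, x ∉ B → F u x = 0)
    (hv : ∀ x : V, x ∉ B → F v x = 0)
    (hbd : ∀ x ∈ B, u x ≤ v x) :
    ∀ x : V, u x ≤ v x := by
  by_contra hcon
  push_neg at hcon
  obtain ⟨z, hz⟩ := hcon
  set g : V → ℝ := fun x => u x - v x with hg
  haveI : Nonempty V := ⟨z⟩
  -- global max of g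
  obtain ⟨x₁, hx₁⟩ := Finite.exists_max g
  have hM : 0 < g x₁ := lt_of_lt_of_le (by simpa [hg] using sub_pos.mpr hz) (hx₁ z)
  -- among argmax of g, maximize u
  set s : Finset V := Finset.univ.filter (fun x => g x = g x₁) with hs
  have hx₁s : x₁ ∈ s := by simp [hs]
  obtain ⟨x₀, hx₀s, hx₀max⟩ := s.exists_max_image u ⟨x₁, hx₁s⟩
  have hx₀g : g x₀ = g x₁ := by simpa [hs] using hx₀s
  have humax : ∀ z : V, g z = g x₁ → u z ≤ u x₀ := fun z hz =>
    hx₀max z (by simp [hs, hz])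
  -- boundary vertices are not in the argmax
  have hBnot : ∀ c ∈ B, g c ≠ g x₁ := by
    intro c hc h
    have : g c ≤ 0 := sub_nonpos.mpr (hbd c hc)
    linarith [h ▸ this]
  -- key step: propagation at interior argmax/u-max vertices
  have key : ∀ x : V, g x = g x₁ → u x = u x₀ → x ∉ B →
      ∀ y : V, adj x y → (g y = g x₁ ∧ u y = u x₀) := by
    intro x hgx hux hxB y hxy
    haveI : Nonempty {y : V // adj x y} := ⟨⟨y, hxy⟩⟩
    set pu : {y : V // adj x y} → ℝ := fun y => w x y.1 * (u y.1 - u x) with hpu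
    set pv : {y : V // adj x y} → ℝ := fun y => w x y.1 * (v y.1 - v x) with hpv
    have hpuv : pu ≤ pv := by
      intro i
      have h1 : g i.1 ≤ g x₁ := hx₁ i.1
      have : u i.1 - u x ≤ v i.1 - v x := by
        simp only [hg] at h1 hgx; linarith
      exact mul_le_mul_of_nonneg_left this (hw x i.1 i.2).le
    have hFu : wp x * sSup (Set.range pu) + wm x * sInf (Set.range pu) + f x pu = 0 := by
      have := (hF u x hxB).symm.trans (hu x hxB)
      simpa [eikP, eikM, hpu] using this
    have hFv : wp x * sSup (Set.range pv) + wm x * sInf (Set.range pv) + f x pv = 0 := by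
      have := (hF v x hxB).symm.trans (hv x hxB)
      simpa [eikP, eikM, hpv] using this
    have hwpx := hwp x hxB
    have hwmx := hwm x hxB
    -- Step A: sSup (range pu) ≤ 0
    have hsupA : sSup (Set.range pu) ≤ 0 := by
      by_contra hpos
      push_neg at hpos
      have hsup_le : sSup (Set.range pu) ≤ sSup (Set.range pv) := rsup_mono hpuv
      have hinf_le : sInf (Set.range pu) ≤ sInf (Set.range pv) := rinf_mono hpuv
      have hf_le : f x pu ≤ f x pv := hell x hxB pu pv hpuv
      have hsup_eq : sSup (Set.range pu) = sSup (Set.range pv) := by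
        have h1 : wp x * sSup (Set.range pu) ≤ wp x * sSup (Set.range pv) :=
          mul_le_mul_of_nonneg_left hsup_le hwpx.le
        have h2 : wm x * sInf (Set.range pu) ≤ wm x * sInf (Set.range pv) :=
          mul_le_mul_of_nonneg_left hinf_le hwmx.le
        have : wp x * sSup (Set.range pu) = wp x * sSup (Set.range pv) := by linarith
        exact mul_left_cancel₀ hwpx.ne' this
      obtain ⟨i, hi⟩ := rsup_mem pu
      have h3 : pv i ≤ sSup (Set.range pv) := le_rsup pv i
      have h4 : pu i = pv i := le_antisymm (hpuv i) (h3.trans (hsup_eq.symm.trans hi).le)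
      have hwi := hw x i.1 i.2
      have h5 : u i.1 - u x = v i.1 - v x := by
        have := h4
        simp only [hpu, hpv] at this
        exact mul_left_cancel₀ hwi.ne' this
      have h6 : g i.1 = g x₁ := by simp only [hg] at hgx ⊢; linarith [hgx]
      have h7 : u i.1 ≤ u x := hux ▸ humax i.1 h6
      have h8 : 0 < pu i := hi ▸ hpos
      have h9 : 0 < u i.1 - u x := by
        by_contra hle
        push_neg at hle
        have := mul_nonpos_of_nonneg_of_nonpos hwi.le hle
        simp only [hpu] at h8
        linarith
      linarith
    -- Step B: u is constant on neighbors
    have hinfA : sInf (Set.range pu) ≤ sSup (Set.range pu) := by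
      obtain ⟨i, hi⟩ := rsup_mem pu
      exact hi ▸ rinf_le pu i
    have hfA : f x pu ≤ 0 :=
      le_trans (hhom x hxB pu).2 (mul_nonpos_iff.mpr (Or.inl ⟨hw0 x hxB, hsupA⟩))
    have hsup0 : sSup (Set.range pu) = 0 := by
      have h1 : wp x * sSup (Set.range pu) ≤ 0 := mul_nonpos_iff.mpr (Or.inl ⟨hwpx.le, hsupA⟩)
      have h2 : wm x * sInf (Set.range pu) ≤ 0 :=
        mul_nonpos_iff.mpr (Or.inl ⟨hwmx.le, le_trans hinfA hsupA⟩)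
      have : wp x * sSup (Set.range pu) = 0 := by linarith
      exact (mul_eq_zero.mp this).resolve_left hwpx.ne'
    have hinf0 : sInf (Set.range pu) = 0 := by
      have h2 : wm x * sInf (Set.range pu) ≤ 0 :=
        mul_nonpos_iff.mpr (Or.inl ⟨hwmx.le, le_trans hinfA hsupA⟩)
      have hf2 : f x pu ≤ 0 := hfA
      have : wm x * sInf (Set.range pu) = 0 := by
        rw [hsup0] at hFu; linarith
      exact (mul_eq_zero.mp this).resolve_left hwmx.ne'
    have hpu0 : ∀ i, pu i = 0 := fun i =>
      le_antisymm (hsup0 ▸ le_rsup pu i) (hinf0 ▸ rinf_le pu i)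
    -- Step C: v is constant on neighbors
    have hpv_nonneg : ∀ i, 0 ≤ pv i := fun i => (hpu0 i) ▸ hpuv i
    have hinfv : 0 ≤ sInf (Set.range pv) := by
      obtain ⟨i, hi⟩ := rinf_mem pv
      exact hi ▸ hpv_nonneg i
    have hsupv : sInf (Set.range pv) ≤ sSup (Set.range pv) := by
      obtain ⟨i, hi⟩ := rsup_mem pv
      exact hi ▸ rinf_le pv i
    have hfv : 0 ≤ f x pv :=
      le_trans (mul_nonneg (hw0 x hxB) hinfv) (hhom x hxB pv).1
    have hsupv0 : sSup (Set.range pv) = 0 := by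
      have h1 : 0 ≤ wp x * sSup (Set.range pv) :=
        mul_nonneg hwpx.le (le_trans hinfv hsupv)
      have h2 : 0 ≤ wm x * sInf (Set.range pv) := mul_nonneg hwmx.le hinfv
      have : wp x * sSup (Set.range pv) = 0 := by linarith
      exact (mul_eq_zero.mp this).resolve_left hwpx.ne'
    have hinfv0 : sInf (Set.range pv) = 0 :=
      le_antisymm (hsupv0 ▸ hsupv) hinfv
    have hpv0 : ∀ i, pv i = 0 := fun i =>
      le_antisymm (hsupv0 ▸ le_rsup pv i) (hinfv0 ▸ rinf_le pv i)
    -- conclude for the given neighbor y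
    have hwy := hw x y hxy
    have huy : u y = u x := by
      have := hpu0 ⟨y, hxy⟩
      simp only [hpu] at this
      have := (mul_eq_zero.mp this).resolve_left hwy.ne'
      linarith [sub_eq_zero.mp this]
    have hvy : v y = v x := by
      have := hpv0 ⟨y, hxy⟩
      simp only [hpv] at this
      have := (mul_eq_zero.mp this).resolve_left hwy.ne'
      linarith [sub_eq_zero.mp this]
    constructor
    · simp only [hg] at hgx ⊢; rw [huy, hvy]; exact hgx
    · rw [huy, hux]
  -- propagate along a path to the boundary
  obtain ⟨b, hbB, hpath⟩ := hconn x₀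
  have hP : ∀ b : V, Relation.ReflTransGen adj x₀ b → g b = g x₁ ∧ u b = u x₀ := by
    intro b hpath
    induction hpath with
    | refl => exact ⟨hx₀g, rfl⟩
    | tail hp hadj ih =>
      rename_i c d
      have hcB : c ∉ B := fun hc => hBnot c hc ih.1
      exact key c ih.1 ih.2 hcB d hadj
  exact hBnot b hbB (hP b hpath).1
end

section
/- Existence for homogeneous elliptic equations: Let G be a finite weighted directed graph with nonempty boundary ∂V. Let f(x,p), defined for interior vertices x and p ∈ ℝ^{d(x)}, be elliptic, homogeneous, and continuous in p for each fixed x, and let g : ∂V → ℝ. Then the Dirichlet problem has a solution: there exists u : V → ℝ with f(x, ∇u(x)) = 0 for every interior vertex x and u(x) = g(x) for every x ∈ ∂V; moreover u can be taken with min_{∂V} g ≤ u(x) ≤ max_{∂V} g for all x ∈ V. -/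
/-!
STATEMENT 8: Existence for homogeneous elliptic equations.

Let `f x p` (for interior vertices `x` and gradient vectors
`p : {y // adj x y} → ℝ`) be elliptic (`p ≤ q → f x p ≤ f x q`),
homogeneous (`w₀ x * min p ≤ f x p ≤ w₀ x * max p` for a nonnegative `w₀`,
where `min p = sInf (Set.range p)`, `max p = sSup (Set.range p)` over the
finite nonempty set of neighbors), and continuous in `p`.  Then the
Dirichlet problem `f x (∇u x) = 0` in the interior, `u = g` on the boundary,
has a solution `u`, which moreover satisfies
`min_{∂V} g ≤ u ≤ max_{∂V} g` everywhere.
-/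

namespace EHE

variable {V : Type*}

/-- The gradient vector of `u` at `x` when the value at `x` is replaced by `t`. -/
def gradv (adj : V → V → Prop) (w : V → V → ℝ) (u : V → ℝ) (x : V) (t : ℝ) :
    {y : V // adj x y} → ℝ := fun y => w x y.1 * (u y.1 - t)

/-- max of `u` over neighbors of `x`. -/
noncomputable def nSup (adj : V → V → Prop) (u : V → ℝ) (x : V) : ℝ :=
  sSup (Set.range fun y : {y : V // adj x y} => u y.1)

/-- min of `u` over neighbors of `x`. -/
noncomputable def nInf (adj : V → V → Prop) (u : V → ℝ) (x : V) : ℝ :=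
  sInf (Set.range fun y : {y : V // adj x y} => u y.1)

/-- Candidate set for solving the one-point equation. -/
def SS (adj : V → V → Prop) (w : V → V → ℝ)
    (f : (x : V) → ({y : V // adj x y} → ℝ) → ℝ) (u : V → ℝ) (x : V) : Set ℝ :=
  {t : ℝ | 0 ≤ f x (gradv adj w u x t)} ∩ Set.Iic (nSup adj u x)

noncomputable def tv (adj : V → V → Prop) (w : V → V → ℝ)
    (f : (x : V) → ({y : V // adj x y} → ℝ) → ℝ) (u : V → ℝ) (x : V) : ℝ :=
  sSup (SS adj w f u x)

lemma nInf_mem_SS [Finite V] (adj : V → V → Prop) (w : V → V → ℝ)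
    (f : (x : V) → ({y : V // adj x y} → ℝ) → ℝ) (x : V)
    (hnb : Nonempty {y : V // adj x y})
    (hw : ∀ y : V, adj x y → 0 < w x y)
    (w0x : ℝ) (hw0 : 0 ≤ w0x)
    (hhom : ∀ p : {y : V // adj x y} → ℝ,
      w0x * sInf (Set.range p) ≤ f x p ∧ f x p ≤ w0x * sSup (Set.range p))
    (u : V → ℝ) : nInf adj u x ∈ SS adj w f u x := by
  constructor
  · have hIle : ∀ y : {y : V // adj x y}, nInf adj u x ≤ u y.1 := fun y =>
      csInf_le (Set.finite_range _).bddBelow ⟨y, rfl⟩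
    have hp : ∀ y : {y : V // adj x y}, 0 ≤ gradv adj w u x (nInf adj u x) y := fun y =>
      mul_nonneg (hw y.1 y.2).le (sub_nonneg.mpr (hIle y))
    have h0 : 0 ≤ sInf (Set.range (gradv adj w u x (nInf adj u x))) :=
      le_csInf (Set.range_nonempty _) (by rintro b ⟨y, rfl⟩; exact hp y)
    calc (0:ℝ) ≤ w0x * sInf (Set.range (gradv adj w u x (nInf adj u x))) :=
          mul_nonneg hw0 h0
      _ ≤ f x (gradv adj w u x (nInf adj u x)) := (hhom _).1
  · exact Set.mem_Iic.mpr (csInf_le_csSup (Set.range_nonempty _) (Set.finite_range _).bddBelow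
      (Set.finite_range _).bddAbove)

lemma SS_bddAbove (adj : V → V → Prop) (w : V → V → ℝ)
    (f : (x : V) → ({y : V // adj x y} → ℝ) → ℝ) (u : V → ℝ) (x : V) :
    BddAbove (SS adj w f u x) := ⟨nSup adj u x, fun _ ht => ht.2⟩

lemma tv_spec [Finite V] (adj : V → V → Prop) (w : V → V → ℝ)
    (f : (x : V) → ({y : V // adj x y} → ℝ) → ℝ) (x : V)
    (hnb : Nonempty {y : V // adj x y})
    (hw : ∀ y : V, adj x y → 0 < w x y)
    (hell : ∀ p q : {y : V // adj x y} → ℝ, p ≤ q → f x p ≤ f x q)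
    (w0x : ℝ) (hw0 : 0 ≤ w0x)
    (hhom : ∀ p : {y : V // adj x y} → ℝ,
      w0x * sInf (Set.range p) ≤ f x p ∧ f x p ≤ w0x * sSup (Set.range p))
    (hcont : Continuous (f x))
    (u : V → ℝ) :
    nInf adj u x ≤ tv adj w f u x ∧ tv adj w f u x ≤ nSup adj u x ∧
      f x (gradv adj w u x (tv adj w f u x)) = 0 := by
  have hmemInf := nInf_mem_SS adj w f x hnb hw w0x hw0 hhom u
  have hSbdd := SS_bddAbove adj w f u x
  have hSne : (SS adj w f u x).Nonempty := ⟨_, hmemInf⟩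
  have hcth : Continuous fun t => f x (gradv adj w u x t) := by
    apply hcont.comp
    exact continuous_pi fun y =>
      (continuous_const.mul (continuous_const.sub continuous_id))
  have hSclosed : IsClosed (SS adj w f u x) :=
    (isClosed_le continuous_const hcth).inter isClosed_Iic
  have htmem : tv adj w f u x ∈ SS adj w f u x := hSclosed.csSup_mem hSne hSbdd
  have h1 : nInf adj u x ≤ tv adj w f u x := le_csSup hSbdd hmemInf
  have h2 : tv adj w f u x ≤ nSup adj u x := htmem.2
  refine ⟨h1, h2, le_antisymm ?_ htmem.1⟩
  by_contra hgt
  push_neg at hgt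
  have hSupNonpos : f x (gradv adj w u x (nSup adj u x)) ≤ 0 := by
    have hleS : ∀ y : {y : V // adj x y}, u y.1 ≤ nSup adj u x := fun y =>
      le_csSup (Set.finite_range _).bddAbove ⟨y, rfl⟩
    have hp : ∀ y : {y : V // adj x y}, gradv adj w u x (nSup adj u x) y ≤ 0 := fun y =>
      mul_nonpos_iff.mpr (Or.inl ⟨(hw y.1 y.2).le, sub_nonpos.mpr (hleS y)⟩)
    have h0 : sSup (Set.range (gradv adj w u x (nSup adj u x))) ≤ 0 :=
      csSup_le (Set.range_nonempty _) (by rintro b ⟨y, rfl⟩; exact hp y)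
    exact (hhom _).2.trans (mul_nonpos_iff.mpr (Or.inl ⟨hw0, h0⟩))
  rcases eq_or_lt_of_le h2 with heq | hlt
  · rw [heq] at hgt
    exact absurd hSupNonpos (not_le.mpr hgt)
  · have hU : {t : ℝ | 0 < f x (gradv adj w u x t)} ∈ nhds (tv adj w f u x) :=
      (isOpen_lt continuous_const hcth).mem_nhds hgt
    rcases Metric.mem_nhds_iff.mp hU with ⟨δ, hδ, hball⟩
    set t' := min (tv adj w f u x + δ/2) (nSup adj u x) with ht'
    have ht'gt : tv adj w f u x < t' := lt_min (by linarith) hlt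
    have ht'mem_ball : t' ∈ Metric.ball (tv adj w f u x) δ := by
      rw [Metric.mem_ball, Real.dist_eq, abs_of_pos (sub_pos.mpr ht'gt)]
      have h3 : t' ≤ tv adj w f u x + δ/2 := min_le_left _ _
      linarith
    have ht'pos : 0 < f x (gradv adj w u x t') := hball ht'mem_ball
    have ht'S : t' ∈ SS adj w f u x :=
      ⟨Set.mem_setOf.mpr ht'pos.le, Set.mem_Iic.mpr (min_le_right _ _)⟩
    exact absurd (le_csSup hSbdd ht'S) (not_le.mpr ht'gt)

lemma tv_mono [Finite V] (adj : V → V → Prop) (w : V → V → ℝ)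
    (f : (x : V) → ({y : V // adj x y} → ℝ) → ℝ) (x : V)
    (hnb : Nonempty {y : V // adj x y})
    (hw : ∀ y : V, adj x y → 0 < w x y)
    (hell : ∀ p q : {y : V // adj x y} → ℝ, p ≤ q → f x p ≤ f x q)
    (w0x : ℝ) (hw0 : 0 ≤ w0x)
    (hhom : ∀ p : {y : V // adj x y} → ℝ,
      w0x * sInf (Set.range p) ≤ f x p ∧ f x p ≤ w0x * sSup (Set.range p))
    (u v : V → ℝ) (huv : ∀ z, u z ≤ v z) :
    tv adj w f u x ≤ tv adj w f v x := by
  have hsub : SS adj w f u x ⊆ SS adj w f v x := by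
    rintro t ⟨h1, h2⟩
    constructor
    · refine h1.trans (hell _ _ ?_)
      intro y
      exact mul_le_mul_of_nonneg_left (sub_le_sub_right (huv y.1) t) (hw y.1 y.2).le
    · refine Set.mem_Iic.mpr ((Set.mem_Iic.mp h2).trans ?_)
      refine csSup_le (Set.range_nonempty _) ?_
      rintro b ⟨y, rfl⟩
      exact (huv y.1).trans (le_csSup (Set.finite_range _).bddAbove ⟨y, rfl⟩)
  exact csSup_le_csSup (SS_bddAbove adj w f v x)
    ⟨_, nInf_mem_SS adj w f x hnb hw w0x hw0 hhom u⟩ hsub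

end EHE

theorem existence_homogeneous_elliptic
    {V : Type*} [Fintype V]
    (adj : V → V → Prop) (w : V → V → ℝ) (B : Set V)
    (hB : B.Nonempty)
    (hne : ∀ x y : V, adj x y → x ≠ y)
    (hw : ∀ x y : V, adj x y → 0 < w x y)
    (hdeg : ∀ x : V, x ∉ B → ∃ y : V, adj x y)
    (f : (x : V) → ({y : V // adj x y} → ℝ) → ℝ)
    (hell : ∀ x : V, x ∉ B → ∀ p q : {y : V // adj x y} → ℝ,
      p ≤ q → f x p ≤ f x q)
    (w0 : V → ℝ) (hw0 : ∀ x : V, x ∉ B → 0 ≤ w0 x)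
    (hhom : ∀ (x : V), x ∉ B → ∀ p : {y : V // adj x y} → ℝ,
      w0 x * sInf (Set.range p) ≤ f x p ∧ f x p ≤ w0 x * sSup (Set.range p))
    (hcont : ∀ x : V, x ∉ B → Continuous (f x))
    (g : V → ℝ) :
    ∃ u : V → ℝ,
      (∀ x : V, x ∉ B → f x (fun y => w x y.1 * (u y.1 - u x)) = 0) ∧
      (∀ x ∈ B, u x = g x) ∧
      (∀ x : V, sInf (g '' B) ≤ u x ∧ u x ≤ sSup (g '' B)) := by
  classical
  set m := sInf (g '' B) with hm
  set M := sSup (g '' B) with hMdef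
  have hgBfin : (g '' B).Finite := (Set.toFinite B).image g
  have hmle : ∀ x ∈ B, m ≤ g x := fun x hx => csInf_le hgBfin.bddBelow ⟨x, hx, rfl⟩
  have hleM : ∀ x ∈ B, g x ≤ M := fun x hx => le_csSup hgBfin.bddAbove ⟨x, hx, rfl⟩
  have hmM : m ≤ M := by
    obtain ⟨x, hx⟩ := hB
    exact (hmle x hx).trans (hleM x hx)
  have hnb : ∀ x, x ∉ B → Nonempty {y : V // adj x y} := fun x hx =>
    (hdeg x hx).elim fun y hy => ⟨⟨y, hy⟩⟩
  set T : (V → ℝ) → V → ℝ :=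
    fun u x => if x ∈ B then g x else EHE.tv adj w f u x with hT
  have hT_b : ∀ (u : V → ℝ), ∀ x ∈ B, T u x = g x := fun u x hx => if_pos hx
  have hT_i : ∀ (u : V → ℝ) (x : V), x ∉ B → T u x = EHE.tv adj w f u x :=
    fun u x hx => if_neg hx
  have hnInf_ge : ∀ (u : V → ℝ) (x : V), x ∉ B → (∀ z, m ≤ u z) →
      m ≤ EHE.nInf adj u x := by
    intro u x hx hu
    have := hnb x hx
    have hmem : EHE.nInf adj u x ∈ Set.range (fun y : {y : V // adj x y} => u y.1) :=
      (Set.range_nonempty _).csInf_mem (Set.finite_range _)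
    obtain ⟨y, hy⟩ := hmem
    exact hy ▸ hu y.1
  have hnSup_le : ∀ (u : V → ℝ) (x : V), x ∉ B → (∀ z, u z ≤ M) →
      EHE.nSup adj u x ≤ M := by
    intro u x hx hu
    have := hnb x hx
    have hmem : EHE.nSup adj u x ∈ Set.range (fun y : {y : V // adj x y} => u y.1) :=
      (Set.range_nonempty _).csSup_mem (Set.finite_range _)
    obtain ⟨y, hy⟩ := hmem
    exact hy ▸ hu y.1
  have hspec : ∀ (u : V → ℝ) (x : V), x ∉ B →
      EHE.nInf adj u x ≤ EHE.tv adj w f u x ∧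
      EHE.tv adj w f u x ≤ EHE.nSup adj u x ∧
      f x (EHE.gradv adj w u x (EHE.tv adj w f u x)) = 0 := fun u x hx =>
    EHE.tv_spec adj w f x (hnb x hx) (fun y hy => hw x y hy) (hell x hx)
      (w0 x) (hw0 x hx) (hhom x hx) (hcont x hx) u
  have hTmono : ∀ u v : V → ℝ, (∀ z, u z ≤ v z) → ∀ x, T u x ≤ T v x := by
    intro u v huv x
    by_cases hx : x ∈ B
    · rw [hT_b u x hx, hT_b v x hx]
    · rw [hT_i u x hx, hT_i v x hx]
      exact EHE.tv_mono adj w f x (hnb x hx) (fun y hy => hw x y hy) (hell x hx)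
        (w0 x) (hw0 x hx) (hhom x hx) u v huv
  have hTbnd : ∀ u : V → ℝ, (∀ z, m ≤ u z ∧ u z ≤ M) →
      ∀ x, m ≤ T u x ∧ T u x ≤ M := by
    intro u hu x
    by_cases hx : x ∈ B
    · rw [hT_b u x hx]
      exact ⟨hmle x hx, hleM x hx⟩
    · rw [hT_i u x hx]
      obtain ⟨h1, h2, _⟩ := hspec u x hx
      exact ⟨(hnInf_ge u x hx fun z => (hu z).1).trans h1,
             h2.trans (hnSup_le u x hx fun z => (hu z).2)⟩
  set A : Set (V → ℝ) := {u | (∀ z, m ≤ u z ∧ u z ≤ M) ∧ ∀ z, u z ≤ T u z} with hA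
  have hconstA : (fun _ : V => m) ∈ A := by
    refine ⟨fun z => ⟨le_rfl, hmM⟩, fun z => ?_⟩
    exact (hTbnd (fun _ => m) (fun z => ⟨le_rfl, hmM⟩) z).1
  have hAxne : ∀ z, ((fun v : V → ℝ => v z) '' A).Nonempty :=
    fun z => ⟨m, ⟨_, hconstA, rfl⟩⟩
  have hAxbdd : ∀ z, BddAbove ((fun v : V → ℝ => v z) '' A) := fun z =>
    ⟨M, by rintro r ⟨v, hv, rfl⟩; exact (hv.1 z).2⟩
  set ustar : V → ℝ := fun z => sSup ((fun v : V → ℝ => v z) '' A) with hustar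
  have hub : ∀ z, m ≤ ustar z ∧ ustar z ≤ M := fun z =>
    ⟨le_csSup (hAxbdd z) ⟨_, hconstA, rfl⟩,
     csSup_le (hAxne z) (by rintro r ⟨v, hv, rfl⟩; exact (hv.1 z).2)⟩
  have hvle : ∀ v ∈ A, ∀ z, v z ≤ ustar z := fun v hv z =>
    le_csSup (hAxbdd z) ⟨v, hv, rfl⟩
  have hstar_le : ∀ z, ustar z ≤ T ustar z := fun z =>
    csSup_le (hAxne z) (by
      rintro r ⟨v, hv, rfl⟩
      exact (hv.2 z).trans (hTmono v ustar (hvle v hv) z))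
  have hTA : T ustar ∈ A :=
    ⟨hTbnd ustar hub, fun z => hTmono ustar (T ustar) hstar_le z⟩
  have hfix : ∀ z, T ustar z = ustar z := fun z =>
    le_antisymm (hvle _ hTA z) (hstar_le z)
  refine ⟨ustar, ?_, ?_, fun x => hub x⟩
  · intro x hx
    have hx' : ustar x = EHE.tv adj w f ustar x :=
      (hfix x).symm.trans (hT_i ustar x hx)
    have h0 := (hspec ustar x hx).2.2
    rw [hx']
    exact h0
  · intro x hx
    exact (hfix x).symm.trans (hT_b ustar x hx)
end

section
/- Existence for eikonal equations: Let G be a finite weighted directed graph with nonempty boundary ∂V which is connected to the boundary, let h be a strictly positive function on the interior vertices, and let g : ∂V → ℝ. Then there exists u : V → ℝ with ‖∇u(x)‖⁺ = h(x) for every interior vertex x and u(x) = g(x) for every x ∈ ∂V. -/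
/-- Path values: `Val adj B c g x t` means there is a directed path from `x`
to the boundary `B`, interior except at its end, of total value `t`
(boundary value minus the accumulated costs `c`). -/
inductive Val {V : Type*} (adj : V → V → Prop) (B : Set V) (c : V → V → ℝ)
    (g : V → ℝ) : V → ℝ → Prop
  | base (x : V) (hx : x ∈ B) : Val adj B c g x (g x)
  | step (x y : V) (t : ℝ) (hx : x ∉ B) (hxy : adj x y)
      (ht : Val adj B c g y t) : Val adj B c g x (t - c x y)

theorem existence_eikonal
    {V : Type*} [Fintype V]
    (adj : V → V → Prop) (w : V → V → ℝ) (B : Set V)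
    (hB : B.Nonempty)
    (hne : ∀ x y : V, adj x y → x ≠ y)
    (hw : ∀ x y : V, adj x y → 0 < w x y)
    (hdeg : ∀ x : V, x ∉ B → ∃ y : V, adj x y)
    (hconn : ∀ x : V, ∃ y ∈ B, Relation.ReflTransGen adj x y)
    (h : V → ℝ) (hh : ∀ x : V, x ∉ B → 0 < h x)
    (g : V → ℝ) :
    ∃ u : V → ℝ,
      (∀ x : V, x ∉ B → eikP adj w u x = h x) ∧
      (∀ x ∈ B, u x = g x) := by
  classical
  set c : V → V → ℝ := fun x y => h x / w x y with hc
  have hcpos : ∀ x y, x ∉ B → adj x y → 0 < c x y := fun x y hx hxy =>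
    div_pos (hh x hx) (hw x y hxy)
  set S : V → Set ℝ := fun x => {t | Val adj B c g x t} with hS
  -- upper bound
  obtain ⟨M, hM⟩ := Finite.exists_le g
  have hub : ∀ x t, t ∈ S x → t ≤ M := by
    intro x t ht
    induction ht with
    | base x hx => exact hM x
    | step x y t hx hxy ht ih =>
        have := hcpos x y hx hxy
        linarith
  have hbdd : ∀ x, BddAbove (S x) := fun x => ⟨M, fun t ht => hub x t ht⟩
  -- nonemptiness
  have hex : ∀ x, (S x).Nonempty := by
    intro x
    obtain ⟨b, hb, hreach⟩ := hconn x
    induction hreach using Relation.ReflTransGen.head_induction_on with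
    | refl => exact ⟨g b, Val.base b hb⟩
    | @head a a' hxy hr ih =>
        by_cases ha : a ∈ B
        · exact ⟨g a, Val.base a ha⟩
        · obtain ⟨t, ht⟩ := ih
          exact ⟨t - c a a', Val.step a a' t ha hxy ht⟩
  set u : V → ℝ := fun x => sSup (S x) with hu
  -- boundary values
  have huB : ∀ x ∈ B, u x = g x := by
    intro x hx
    have hset : S x = {g x} := by
      ext t
      constructor
      · rintro (⟨_, _⟩ | ⟨_, _, _, hx', _, _⟩)
        · rfl
        · exact absurd hx hx'
      · rintro rfl; exact Val.base x hx
    rw [hu]; simp only [hset, csSup_singleton]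
  -- monotonicity inequality: u x ≥ u y - c x y for interior x
  have hineq : ∀ x y, x ∉ B → adj x y → u y - c x y ≤ u x := by
    intro x y hx hxy
    have : u y ≤ u x + c x y := by
      apply csSup_le (hex y)
      intro t ht
      have : t - c x y ≤ u x := le_csSup (hbdd x) (Val.step x y t hx hxy ht)
      linarith
    linarith
  refine ⟨u, ?_, huB⟩
  intro x hx
  -- the neighbor finset
  set N : Finset V := Finset.univ.filter (adj x) with hN
  have hNne : N.Nonempty := by
    obtain ⟨y, hy⟩ := hdeg x hx
    exact ⟨y, by simp [hN, hy]⟩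
  set m : ℝ := N.sup' hNne (fun y => u y - c x y) with hm
  have hum : u x = m := by
    apply le_antisymm
    · apply csSup_le (hex x)
      intro t ht
      rcases ht with (⟨_, hx'⟩ | ⟨_, y, t', _, hxy, ht'⟩)
      · exact absurd hx' hx
      · have h1 : t' ≤ u y := le_csSup (hbdd y) ht'
        have h2 : u y - c x y ≤ m :=
          Finset.le_sup' (fun y => u y - c x y) (by simp [hN, hxy])
        linarith
    · obtain ⟨y, hyN, hy⟩ := Finset.exists_mem_eq_sup' hNne (fun y => u y - c x y)
      have hxy : adj x y := by simpa [hN] using hyN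
      rw [hm, hy]
      exact hineq x y hx hxy
  -- compute eikP
  obtain ⟨y₀, hy₀⟩ := hdeg x hx
  have hnonempty : Nonempty {y : V // adj x y} := ⟨⟨y₀, hy₀⟩⟩
  have hfin : (Set.range fun y : {y : V // adj x y} =>
      w x y.1 * (u y.1 - u x)).Finite := Set.finite_range _
  apply le_antisymm
  · apply csSup_le (Set.range_nonempty _)
    rintro t ⟨⟨y, hxy⟩, rfl⟩
    have h1 : u y - u x ≤ c x y := by have := hineq x y hx hxy; linarith
    have h2 : w x y * (u y - u x) ≤ w x y * c x y :=
      mul_le_mul_of_nonneg_left h1 (le_of_lt (hw x y hxy))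
    have h3 : w x y * c x y = h x := by
      rw [hc, mul_comm]
      exact div_mul_cancel₀ (h x) (ne_of_gt (hw x y hxy))
    simpa [h3] using h2
  · obtain ⟨y, hyN, hy⟩ := Finset.exists_mem_eq_sup' hNne (fun y => u y - c x y)
    have hxy : adj x y := by simpa [hN] using hyN
    have hux : u x = u y - c x y := by rw [hum, hm, hy]
    have hval : w x y * (u y - u x) = h x := by
      rw [hux]
      have : u y - (u y - c x y) = c x y := by ring
      rw [this, hc, mul_comm]
      exact div_mul_cancel₀ (h x) (ne_of_gt (hw x y hxy))
    calc h x = w x y * (u y - u x) := hval.symm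
      _ ≤ _ := le_csSup hfin.bddAbove ⟨⟨y, hxy⟩, rfl⟩
end

section
/- The distance function solves the eikonal equation: Let G be a finite weighted directed graph with nonempty boundary ∂V which is connected to the boundary, and define u(x) = min_{y ∈ ∂V} d(x,y), the (positive) distance to the boundary. Then u(x) = 0 for every x ∈ ∂V and ‖∇u(x)‖⁻ + 1 = 0 for every interior vertex x; moreover, the negative distance function −u satisfies −u(x) = 0 on ∂V and ‖∇(−u)(x)‖⁺ − 1 = 0 for every interior vertex x. -/
/-- The cost (length) of a path, where each step from `a` to `b` costs
`1 / w a b` (the directed distance between neighbors). -/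
noncomputable def pathCost {V : Type*} (w : V → V → ℝ) : List V → ℝ
  | [] => 0
  | [_] => 0
  | a :: b :: rest => 1 / w a b + pathCost w (b :: rest)

/-- The distance from `x` to the boundary set `B`: the infimum of costs of
directed paths (chains for `adj`) starting at `x` and ending in `B`;
this equals `min_{y ∈ B} d(x, y)`. -/
noncomputable def distToBdry {V : Type*} (adj : V → V → Prop)
    (w : V → V → ℝ) (B : Set V) (x : V) : ℝ :=
  sInf {c : ℝ | ∃ l : List V, l.Chain' adj ∧ l.head? = some x ∧
    (∃ y ∈ B, l.getLast? = some y) ∧ c = pathCost w l}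

section Aux

variable {V : Type*} {adj : V → V → Prop} {w : V → V → ℝ} {B : Set V}

/-- The set of path costs from `x` to the boundary. -/
def pathSet (adj : V → V → Prop) (w : V → V → ℝ) (B : Set V) (x : V) : Set ℝ :=
  {c : ℝ | ∃ l : List V, l.Chain' adj ∧ l.head? = some x ∧
    (∃ y ∈ B, l.getLast? = some y) ∧ c = pathCost w l}

lemma distToBdry_eq (adj : V → V → Prop) (w : V → V → ℝ) (B : Set V) (x : V) :
    distToBdry adj w B x = sInf (pathSet adj w B x) := rfl

lemma pathCost_nonneg (hw : ∀ x y : V, adj x y → 0 < w x y) :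
    ∀ l : List V, l.Chain' adj → 0 ≤ pathCost w l
  | [], _ => le_refl 0
  | [_], _ => le_refl 0
  | a :: b :: rest, h => by
      rw [List.Chain', List.isChain_cons_cons] at h
      have h1 := pathCost_nonneg hw (b :: rest) h.2
      have h2 := hw a b h.1
      have h3 : 0 < 1 / w a b := by positivity
      simp only [pathCost]
      linarith

lemma pathSet_nonneg (hw : ∀ x y : V, adj x y → 0 < w x y) {x : V} {c : ℝ}
    (hc : c ∈ pathSet adj w B x) : 0 ≤ c := by
  obtain ⟨l, hchain, -, -, rfl⟩ := hc
  exact pathCost_nonneg hw l hchain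

lemma pathSet_bddBelow (hw : ∀ x y : V, adj x y → 0 < w x y) (x : V) :
    BddBelow (pathSet adj w B x) :=
  ⟨0, fun _ hc => pathSet_nonneg hw hc⟩

lemma pathSet_nonempty {x y : V} (hy : y ∈ B)
    (h : Relation.ReflTransGen adj x y) : (pathSet adj w B x).Nonempty := by
  have key : ∃ l : List V, l.Chain' adj ∧ l.head? = some x ∧
      l.getLast? = some y := by
    induction h using Relation.ReflTransGen.head_induction_on with
    | refl => exact ⟨[y], List.isChain_singleton y, rfl, rfl⟩
    | head hab _ ih =>
      rename_i a b _
      obtain ⟨l, hchain, hh, hl⟩ := ih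
      match l, hh with
      | c :: rest, hh =>
        have hbc : c = b := by simpa using hh
        refine ⟨a :: c :: rest, ?_, rfl, ?_⟩
        · rw [List.Chain', List.isChain_cons_cons]
          exact ⟨by rw [hbc]; exact hab, hchain⟩
        · rw [List.getLast?_cons_cons]
          exact hl
  obtain ⟨l, hchain, hh, hl⟩ := key
  exact ⟨pathCost w l, l, hchain, hh, ⟨y, hy, hl⟩, rfl⟩

lemma zero_mem_pathSet {x : V} (hx : x ∈ B) : (0 : ℝ) ∈ pathSet adj w B x :=
  ⟨[x], List.isChain_singleton x, rfl, ⟨x, hx, rfl⟩, rfl⟩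

/-- Prepending an edge to a path. -/
lemma prepend_mem_pathSet {x y : V} (hxy : adj x y) {c : ℝ}
    (hc : c ∈ pathSet adj w B y) : 1 / w x y + c ∈ pathSet adj w B x := by
  obtain ⟨l, hchain, hh, ⟨z, hz, hl⟩, rfl⟩ := hc
  match l, hh with
  | b :: rest, hh =>
    have hyb : b = y := by simpa using hh
    refine ⟨x :: b :: rest, ?_, rfl, ⟨z, hz, ?_⟩, ?_⟩
    · rw [List.Chain', List.isChain_cons_cons]; exact ⟨by rw [hyb]; exact hxy, hchain⟩
    · rw [List.getLast?_cons_cons]; exact hl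
    · simp [pathCost, hyb]

/-- Decomposing a path from an interior vertex. -/
lemma pathSet_decompose {x : V} (hx : x ∉ B) {c : ℝ}
    (hc : c ∈ pathSet adj w B x) :
    ∃ y : V, adj x y ∧ ∃ c' ∈ pathSet adj w B y, c = 1 / w x y + c' := by
  obtain ⟨l, hchain, hh, ⟨z, hz, hl⟩, rfl⟩ := hc
  match l, hh with
  | [a], hh =>
    have hxa : a = x := by simpa using hh
    subst hxa
    have haz : a = z := by simpa using hl
    exact absurd (by rw [haz]; exact hz) hx
  | a :: b :: rest, hh =>
    have hxa : a = x := by simpa using hh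
    subst hxa
    rw [List.Chain', List.isChain_cons_cons] at hchain
    refine ⟨b, hchain.1, pathCost w (b :: rest), ?_, by simp [pathCost]⟩
    refine ⟨b :: rest, hchain.2, rfl, ⟨z, hz, ?_⟩, rfl⟩
    rw [List.getLast?_cons_cons] at hl
    exact hl

end Aux

theorem distance_solves_eikonal
    {V : Type*} [Fintype V]
    (adj : V → V → Prop) (w : V → V → ℝ) (B : Set V)
    (hB : B.Nonempty)
    (hne : ∀ x y : V, adj x y → x ≠ y)
    (hw : ∀ x y : V, adj x y → 0 < w x y)
    (hdeg : ∀ x : V, x ∉ B → ∃ y : V, adj x y)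
    (hconn : ∀ x : V, ∃ y ∈ B, Relation.ReflTransGen adj x y) :
    (∀ x ∈ B, distToBdry adj w B x = 0) ∧
    (∀ x : V, x ∉ B → eikM adj w (distToBdry adj w B) x + 1 = 0) ∧
    (∀ x ∈ B, -(distToBdry adj w B x) = 0) ∧
    (∀ x : V, x ∉ B →
      eikP adj w (fun z => -(distToBdry adj w B z)) x - 1 = 0) := by
  set u : V → ℝ := distToBdry adj w B with hu
  have hPSne : ∀ x : V, (pathSet adj w B x).Nonempty := fun x => by
    obtain ⟨y, hy, hxy⟩ := hconn x
    exact pathSet_nonempty hy hxy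
  have hbdd : ∀ x : V, BddBelow (pathSet adj w B x) := fun x =>
    pathSet_bddBelow hw x
  -- u = 0 on the boundary
  have hbdry : ∀ x ∈ B, u x = 0 := by
    intro x hx
    rw [hu, distToBdry_eq]
    exact le_antisymm (csInf_le (hbdd x) (zero_mem_pathSet hx))
      (le_csInf (hPSne x) fun c hc => pathSet_nonneg hw hc)
  -- u x ≤ 1/w x y + u y for any edge (x,y)
  have hle : ∀ x y : V, adj x y → u x ≤ 1 / w x y + u y := by
    intro x y hxy
    have h1 : u x - 1 / w x y ≤ u y := by
      have key : u x - 1 / w x y ≤ sInf (pathSet adj w B y) :=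
        le_csInf (hPSne y) fun c hc => by
          have h2 : u x ≤ 1 / w x y + c :=
            csInf_le (hbdd x) (prepend_mem_pathSet hxy hc)
          linarith
      exact key
    linarith
  -- Bellman equation with attained minimizer at interior vertices
  have hbell : ∀ x : V, x ∉ B → ∃ y : V, adj x y ∧ u x = 1 / w x y + u y := by
    intro x hx
    set T : Set ℝ := Set.range (fun y : {y : V // adj x y} => 1 / w x y.1 + u y.1)
      with hT
    have hTfin : T.Finite := Set.finite_range _
    have hTne : T.Nonempty := by
      obtain ⟨y, hy⟩ := hdeg x hx
      exact ⟨_, ⟨⟨y, hy⟩, rfl⟩⟩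
    obtain ⟨⟨y₀, hy₀⟩, hy₀m⟩ := hTne.csInf_mem hTfin
    have hy₀m' : 1 / w x y₀ + u y₀ = sInf T := hy₀m
    refine ⟨y₀, hy₀, le_antisymm ?_ ?_⟩
    · rw [hy₀m']
      exact le_csInf hTne (by rintro c ⟨⟨z, hz⟩, rfl⟩; exact hle x z hz)
    · -- 1/w x y₀ + u y₀ = sInf T ≤ u x
      rw [hy₀m', hu, distToBdry_eq]
      refine le_csInf (hPSne x) fun c hc => ?_
      obtain ⟨z, hz, c', hc', rfl⟩ := pathSet_decompose hx hc
      have h1 : sInf T ≤ 1 / w x z + u z :=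
        csInf_le hTfin.bddBelow ⟨⟨z, hz⟩, rfl⟩
      have h2 : u z ≤ c' := csInf_le (hbdd z) hc'
      linarith
  refine ⟨hbdry, ?_, fun x hx => by rw [hbdry x hx, neg_zero], ?_⟩
  · -- eikM
    intro x hx
    obtain ⟨y₀, hy₀, heq⟩ := hbell x hx
    have hw₀ := hw x y₀ hy₀
    have hmem : (-1 : ℝ) ∈ Set.range
        (fun y : {y : V // adj x y} => w x y.1 * (u y.1 - u x)) := by
      refine ⟨⟨y₀, hy₀⟩, ?_⟩
      show w x y₀ * (u y₀ - u x) = -1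
      have : u y₀ - u x = -(1 / w x y₀) := by rw [heq]; ring
      rw [this]
      field_simp
    have hlb : ∀ c ∈ Set.range
        (fun y : {y : V // adj x y} => w x y.1 * (u y.1 - u x)), (-1 : ℝ) ≤ c := by
      rintro c ⟨⟨z, hz⟩, rfl⟩
      have hwz := hw x z hz
      have h1 := hle x z hz
      have h2 : w x z * (-(1 / w x z)) ≤ w x z * (u z - u x) :=
        mul_le_mul_of_nonneg_left (by linarith) hwz.le
      have h3 : w x z * (1 / w x z) = 1 := by field_simp
      rw [mul_neg, h3] at h2
      exact h2
    have : eikM adj w u x = -1 :=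
      le_antisymm (csInf_le ⟨-1, hlb⟩ hmem) (le_csInf ⟨-1, hmem⟩ hlb)
    rw [this]; ring
  · -- eikP
    intro x hx
    obtain ⟨y₀, hy₀, heq⟩ := hbell x hx
    have hw₀ := hw x y₀ hy₀
    have hmem : (1 : ℝ) ∈ Set.range
        (fun y : {y : V // adj x y} => w x y.1 * (-(u y.1) - -(u x))) := by
      refine ⟨⟨y₀, hy₀⟩, ?_⟩
      show w x y₀ * (-(u y₀) - -(u x)) = 1
      have : -(u y₀) - -(u x) = 1 / w x y₀ := by rw [heq]; ring
      rw [this]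
      field_simp
    have hub : ∀ c ∈ Set.range
        (fun y : {y : V // adj x y} => w x y.1 * (-(u y.1) - -(u x))),
        c ≤ (1 : ℝ) := by
      rintro c ⟨⟨z, hz⟩, rfl⟩
      have hwz := hw x z hz
      have h1 := hle x z hz
      have h2 : w x z * (-(u z) - -(u x)) ≤ w x z * (1 / w x z) :=
        mul_le_mul_of_nonneg_left (by linarith) hwz.le
      have h3 : w x z * (1 / w x z) = 1 := by field_simp
      rw [h3] at h2
      exact h2
    have : eikP adj w (fun z => -(u z)) x = 1 :=
      le_antisymm (csSup_le ⟨1, hmem⟩ hub) (le_csSup ⟨1, hub⟩ hmem)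
    rw [this]; ring
end

section
/- Failure of uniqueness for the graph 1-Laplacian: Let G be the graph with vertex set V = {(i,j) : i,j ∈ {−2,−1,1,2}, |i|+|j| ≤ 3} (twelve vertices), boundary ∂V = {(i,j) ∈ V : |i|+|j| = 3}, all weights equal to 1, where each of the four interior vertices (i,j) with i,j ∈ {−1,1} has the four neighbors (2i, j), (−i, j), (i, 2j), (i, −j) (edges in both directions). Define boundary data g by g(1,2) = g(−1,2) = g(−1,−2) = g(1,−2) = −1 and g(2,1) = g(2,−1) = g(−2,1) = g(−2,−1) = 1. Then the function u equal to 1 at all four interior vertices and to g on ∂V, and the function v equal to −1 at all four interior vertices and to g on ∂V, both satisfy Δ₁u(x) = 0 at every interior vertex x; hence the Dirichlet problem Δ₁u = 0 with boundary data g has two distinct solutions. -/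
/-!
STATEMENT 12: Failure of uniqueness for the graph 1-Laplacian.

Vertices are the pairs `(i,j)` with `i, j ∈ {-2,-1,1,2}` and `|i|+|j| ≤ 3`;
the boundary consists of those with `|i|+|j| = 3`, all weights are `1`.
Each of the four interior vertices `(i,j)` (with `i, j ∈ {-1,1}`) has the
four neighbors `(2i,j), (-i,j), (i,2j), (i,-j)`.  The 1-Laplacian at an
interior vertex is the median of the four gradient components
`u(neighbor) - u(i,j)`; for four numbers the median (the mean of the two
middle values) equals `(a+b+c+d - max - min)/2`.  With boundary data
`g = -1` at `(±1,±2)` and `g = 1` at `(±2,±1)`, both the function `u ≡ 1`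
on the interior and the function `v ≡ -1` on the interior (each extended by
`g` on the boundary) solve `Δ₁ = 0` at every interior vertex, and `u ≠ v`.
-/

/-- The median of four real numbers: the mean of the two middle values,
i.e. `(a+b+c+d - max - min)/2`. -/
noncomputable def median4 (a b c d : ℝ) : ℝ :=
  (a + b + c + d - max (max a b) (max c d) - min (min a b) (min c d)) / 2

theorem one_laplacian_nonuniqueness
    (g u v : ℤ × ℤ → ℝ)
    (hg1 : g (1, 2) = -1) (hg2 : g (-1, 2) = -1)
    (hg3 : g (-1, -2) = -1) (hg4 : g (1, -2) = -1)
    (hg5 : g (2, 1) = 1) (hg6 : g (2, -1) = 1)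
    (hg7 : g (-2, 1) = 1) (hg8 : g (-2, -1) = 1)
    (hu_int : ∀ i j : ℤ, (i = 1 ∨ i = -1) → (j = 1 ∨ j = -1) → u (i, j) = 1)
    (hu_bd : ∀ i j : ℤ, i.natAbs + j.natAbs = 3 → u (i, j) = g (i, j))
    (hv_int : ∀ i j : ℤ, (i = 1 ∨ i = -1) → (j = 1 ∨ j = -1) → v (i, j) = -1)
    (hv_bd : ∀ i j : ℤ, i.natAbs + j.natAbs = 3 → v (i, j) = g (i, j)) :
    (∀ i j : ℤ, (i = 1 ∨ i = -1) → (j = 1 ∨ j = -1) →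
      median4 (1 * (u (2*i, j) - u (i, j))) (1 * (u (-i, j) - u (i, j)))
              (1 * (u (i, 2*j) - u (i, j))) (1 * (u (i, -j) - u (i, j))) = 0) ∧
    (∀ i j : ℤ, (i = 1 ∨ i = -1) → (j = 1 ∨ j = -1) →
      median4 (1 * (v (2*i, j) - v (i, j))) (1 * (v (-i, j) - v (i, j)))
              (1 * (v (i, 2*j) - v (i, j))) (1 * (v (i, -j) - v (i, j))) = 0) ∧
    u ≠ v := by

  refine ⟨?_, ?_, ?_⟩
  · intro i j hi hj
    rcases hi with rfl | rfl <;> rcases hj with rfl | rfl <;>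
      norm_num [hu_int, hu_bd, hg1, hg2, hg3, hg4, hg5, hg6, hg7, hg8, median4]
  · intro i j hi hj
    rcases hi with rfl | rfl <;> rcases hj with rfl | rfl <;>
      norm_num [hv_int, hv_bd, hg1, hg2, hg3, hg4, hg5, hg6, hg7, hg8, median4]
  · intro h
    have h1 : u (1, 1) = 1 := hu_int 1 1 (Or.inl rfl) (Or.inl rfl)
    have h2 : v (1, 1) = -1 := hv_int 1 1 (Or.inl rfl) (Or.inl rfl)
    rw [h, h2] at h1
    norm_num at h1
end

section
/- Consistency of the min-max ball scheme for the normalized infinity Laplacian: Let u : ℝⁿ → ℝ be three times continuously differentiable on a neighborhood of a point x with ∇u(x) ≠ 0. Then, as r → 0⁺, (1/2)( max_{|y−x|=r} u(y) + min_{|y−x|=r} u(y) ) − u(x) = (r²/2) Δ_∞^N u(x) + O(r³), i.e. the difference between the left-hand side and (r²/2)Δ_∞^N u(x) is O(r³). -/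
/-!
STATEMENT 15: Consistency of the min-max ball scheme for the normalized
infinity Laplacian.

For `u : ℝⁿ → ℝ` three times continuously differentiable near `x` with
`∇u(x) ≠ 0`, as `r → 0⁺`,
`(max_{|y-x|=r} u + min_{|y-x|=r} u)/2 - u(x) - (r²/2) Δ∞ᴺ u(x) = O(r³)`,
where `Δ∞ᴺ u(x) = |∇u(x)|⁻² ⟨D²u(x) ∇u(x), ∇u(x)⟩` with
`D²u(x) = fderiv ℝ (gradient u) x`.  The max and min over the (compact,
nonempty since `∇u(x) ≠ 0` forces `n ≥ 1`) sphere are expressed as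
`sSup`/`sInf` of the image of the sphere under `u`.
-/

open RealInnerProductSpace Asymptotics

lemma sphere_quad_bound {E : Type*} [NormedAddCommGroup E] [InnerProductSpace ℝ E]
    (p : E) (A : E →L[ℝ] E) {r : ℝ} (hr : 0 < r) (hp : p ≠ 0)
    {w : E} (hw : ‖w‖ = r) :
    ⟪p, w⟫ + 1/2 * ⟪A w, w⟫ ≤
      r * ‖p‖ + r^2/2 * ((‖p‖^2)⁻¹ * ⟪A p, p⟫) + (2 * ‖A‖^2 / ‖p‖) * r^3 := by
  set c := ‖p‖ with hc
  have hc0 : 0 < c := norm_pos_iff.2 hp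
  set a := ‖A‖ with ha
  have ha0 : 0 ≤ a := norm_nonneg _
  set v : E := (r / c) • p with hv
  have hvnorm : ‖v‖ = r := by
    rw [hv, norm_smul, Real.norm_eq_abs, abs_of_pos (div_pos hr hc0)]
    field_simp
    exact hc.symm
  set d : E := w - v with hd
  set t := ‖d‖ with htdef
  have ht0 : 0 ≤ t := norm_nonneg _
  have hdw : w = v + d := by rw [hd]; abel
  have ht2 : t ≤ 2 * r := by
    calc t ≤ ‖w‖ + ‖v‖ := norm_sub_le _ _
    _ = 2 * r := by rw [hw, hvnorm]; ring
  have hvd : ⟪v, d⟫ = -t^2/2 := by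
    have h1 : ‖w‖^2 = ‖v‖^2 + 2*⟪v,d⟫ + ‖d‖^2 := by rw [hdw]; exact norm_add_sq_real v d
    rw [hw, hvnorm] at h1; rw [← htdef] at h1; linarith
  have hpd : ⟪p, d⟫ = (c/r) * (-t^2/2) := by
    have h2 : ⟪v, d⟫ = (r/c) * ⟪p, d⟫ := real_inner_smul_left _ _ _
    rw [hvd] at h2
    field_simp at h2 ⊢
    linarith
  have hpv : ⟪p, v⟫ = r * c := by
    rw [hv, real_inner_smul_right, real_inner_self_eq_norm_sq, ← hc]
    field_simp
  have hAvv : ⟪A v, v⟫ = r^2 * c⁻¹^2 * ⟪A p, p⟫ := by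
    rw [hv, map_smul, real_inner_smul_left, real_inner_smul_right]
    field_simp
  have hAvd : |⟪A v, d⟫| ≤ a * r * t := by
    calc |⟪A v, d⟫| ≤ ‖A v‖ * ‖d‖ := abs_real_inner_le_norm _ _
    _ ≤ (a * ‖v‖) * t := by
        rw [← htdef]
        exact mul_le_mul_of_nonneg_right (A.le_opNorm v) ht0
    _ = a * r * t := by rw [hvnorm]
  have hAdv : |⟪A d, v⟫| ≤ a * r * t := by
    calc |⟪A d, v⟫| ≤ ‖A d‖ * ‖v‖ := abs_real_inner_le_norm _ _
    _ ≤ (a * t) * r := by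
        rw [hvnorm]
        exact mul_le_mul_of_nonneg_right (A.le_opNorm d) hr.le
    _ = a * r * t := by ring
  have hAdd : |⟪A d, d⟫| ≤ a * t * t := by
    calc |⟪A d, d⟫| ≤ ‖A d‖ * ‖d‖ := abs_real_inner_le_norm _ _
    _ ≤ (a * t) * t := mul_le_mul_of_nonneg_right (A.le_opNorm d) ht0
  have hexp : ⟪A w, w⟫ = ⟪A v, v⟫ + ⟪A v, d⟫ + ⟪A d, v⟫ + ⟪A d, d⟫ := by
    rw [hdw, map_add, inner_add_left, inner_add_right, inner_add_right]; ring
  have hpw : ⟪p, w⟫ = r * c + (c/r) * (-t^2/2) := by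
    rw [hdw, inner_add_right, hpv, hpd]
  have hquad : 2*a*r*t - c*t^2/(2*r) ≤ (2*a^2/c)*r^3 := by
    rw [← sub_nonneg]
    have heq : (2*a^2/c)*r^3 - (2*a*r*t - c*t^2/(2*r)) = (c*t - 2*a*r^2)^2/(2*r*c) := by
      field_simp; ring
    rw [heq]; positivity
  have htt : a * t * t ≤ 2 * a * r * t := by
    nlinarith [mul_nonneg (mul_nonneg ha0 (sub_nonneg.2 ht2)) ht0]
  have habs1 := abs_le.1 hAvd
  have habs2 := abs_le.1 hAdv
  have habs3 := abs_le.1 hAdd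
  have hceq : (c^2)⁻¹ = c⁻¹^2 := by rw [inv_pow]
  have hmain : 1/2*(⟪A v, d⟫ + ⟪A d, v⟫ + ⟪A d, d⟫) - c*t^2/(2*r) ≤ 2*a^2/c*r^3 := by
    linarith [htt, habs1.2, habs2.2, habs3.2, hquad]
  have hrewr : c / r * (-t^2/2) = -(c*t^2/(2*r)) := by ring
  rw [hpw, hexp, hAvv, hceq, hrewr]
  linarith [hmain]

open Metric in
lemma taylor_cubic_bound {E : Type*} [NormedAddCommGroup E] [InnerProductSpace ℝ E]
    [CompleteSpace E] (u : E → ℝ) (x : E) (hu : ContDiffAt ℝ 3 u x) :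
    ∃ K ε : ℝ, 0 < ε ∧ 0 ≤ K ∧ ContinuousOn u (closedBall x ε) ∧
      ∀ y ∈ closedBall x ε,
      |u y - u x - ⟪gradient u x, y - x⟫
        - 1/2 * ⟪fderiv ℝ (gradient u) x (y - x), y - x⟫| ≤ K * ‖y - x‖^3 := by
  set p := gradient u x with hp
  set A := fderiv ℝ (gradient u) x with hA
  -- gradient is C²
  have hgradeq : gradient u = (⇑(InnerProductSpace.toDual ℝ E).symm) ∘ (fderiv ℝ u) := rfl
  have hfd2 : ContDiffAt ℝ 2 (fderiv ℝ u) x := hu.fderiv_right (by norm_num)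
  have hgrad2 : ContDiffAt ℝ 2 (gradient u) x := by
    rw [hgradeq]
    exact ((InnerProductSpace.toDual ℝ E).symm.contDiff (n := 2)).contDiffAt.comp x hfd2
  have hG1 : ContDiffAt ℝ 1 (fun y => fderiv ℝ (gradient u) y) x :=
    hgrad2.fderiv_right (by norm_num)
  obtain ⟨K₀, s, hs, hlip⟩ := hG1.exists_lipschitzOnWith
  obtain ⟨s₂, hs₂, hcd⟩ := hgrad2.contDiffOn (m := 1) (by norm_num) (by simp)
  obtain ⟨s₃, hs₃, hcdu⟩ := hu.contDiffOn (m := 1) (by norm_num) (by simp)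
  have hmem : s ∩ s₂ ∩ s₃ ∈ nhds x := Filter.inter_mem (Filter.inter_mem hs hs₂) hs₃
  obtain ⟨δ, hδ0, hball⟩ := Metric.mem_nhds_iff.1 hmem
  set ε := δ/2 with hε
  have hε0 : 0 < ε := by positivity
  have hball_sub : ball x δ ⊆ s ∩ s₂ ∩ s₃ := hball
  have hcb : closedBall x ε ⊆ ball x δ := by
    apply closedBall_subset_ball; rw [hε]; linarith
  -- differentiability facts
  have hdiffgrad : ∀ y ∈ ball x δ, DifferentiableAt ℝ (gradient u) y := by
    intro y hy
    exact (hcd.mono (fun z hz => ((hball_sub hz).1.2))).differentiableOn one_ne_zero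
      |>.differentiableAt (isOpen_ball.mem_nhds hy)
  have hdiffu : ∀ y ∈ ball x δ, DifferentiableAt ℝ u y := by
    intro y hy
    exact (hcdu.mono (fun z hz => ((hball_sub hz).2))).differentiableOn one_ne_zero
      |>.differentiableAt (isOpen_ball.mem_nhds hy)
  -- Lipschitz bound on the Hessian
  have hGbound : ∀ y ∈ closedBall x ε, ‖fderiv ℝ (gradient u) y - A‖ ≤ K₀ * ‖y - x‖ := by
    intro y hy
    have h1 := hlip.dist_le_mul y ((hball_sub (hcb hy)).1.1)
      x ((hball_sub (mem_ball_self hδ0)).1.1)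
    rw [dist_eq_norm, dist_eq_norm] at h1
    exact h1
  -- gradient Taylor bound
  have hgradbound : ∀ y ∈ closedBall x ε,
      ‖gradient u y - p - A (y - x)‖ ≤ K₀ * ‖y - x‖^2 := by
    intro y hy
    set ρ := ‖y - x‖ with hρ
    have hρ0 : 0 ≤ ρ := norm_nonneg _
    have hρε : ρ ≤ ε := by rwa [hρ, ← dist_eq_norm, ← mem_closedBall]
    have hsub : closedBall x ρ ⊆ closedBall x ε := closedBall_subset_closedBall hρε
    have hderiv : ∀ z ∈ closedBall x ρ,
        HasFDerivWithinAt (fun z => gradient u z - (p + A (z - x)))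
          (fderiv ℝ (gradient u) z - A) (closedBall x ρ) z := by
      intro z hz
      have h1 : HasFDerivAt (gradient u) (fderiv ℝ (gradient u) z) z :=
        (hdiffgrad z (hcb (hsub hz))).hasFDerivAt
      have h2 : HasFDerivAt (fun z => p + A (z - x)) A z := by
        have h3 : HasFDerivAt (fun z : E => A (z - x)) A z := by
          simpa [Function.comp_def] using A.hasFDerivAt.comp z ((hasFDerivAt_id z).sub_const x)
        exact h3.const_add p
      exact (h1.sub h2).hasFDerivWithinAt
    have hbound : ∀ z ∈ closedBall x ρ, ‖fderiv ℝ (gradient u) z - A‖ ≤ K₀ * ρ := by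
      intro z hz
      refine (hGbound z (hsub hz)).trans ?_
      have : ‖z - x‖ ≤ ρ := by rwa [← dist_eq_norm, ← mem_closedBall]
      exact mul_le_mul_of_nonneg_left this K₀.2
    have key := (convex_closedBall x ρ).norm_image_sub_le_of_norm_hasFDerivWithin_le
      hderiv hbound (mem_closedBall_self hρ0)
      (by rw [mem_closedBall, dist_eq_norm])
    simp only [sub_self, map_zero, add_zero, sub_zero, hp] at key
    calc ‖gradient u y - p - A (y - x)‖
        = ‖gradient u y - (gradient u x + A (y - x))‖ := by
          rw [hp]; congr 1; abel
      _ ≤ K₀ * ρ * ‖y - x‖ := key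
      _ = K₀ * ρ^2 := by rw [← hρ]; ring
  -- symmetry of A
  have hsnd : IsSymmSndFDerivAt ℝ u x := hu.isSymmSndFDerivAt (by norm_num)
  have hA_apply : ∀ v w : E, ⟪A v, w⟫ = fderiv ℝ (fderiv ℝ u) x v w := by
    intro v w
    rw [hA, hgradeq, LinearIsometryEquiv.comp_fderiv]
    exact InnerProductSpace.toDual_symm_apply
  have hsymm : ∀ v w : E, ⟪A v, w⟫ = ⟪A w, v⟫ := by
    intro v w
    rw [hA_apply, hA_apply]
    exact hsnd v w
  refine ⟨K₀, ε, hε0, K₀.2, hcdu.continuousOn.mono (fun z hz => (hball_sub (hcb hz)).2), ?_⟩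
  intro y hy
  set ρ := ‖y - x‖ with hρ
  have hρ0 : 0 ≤ ρ := norm_nonneg _
  have hρε : ρ ≤ ε := by rwa [hρ, ← dist_eq_norm, ← mem_closedBall]
  have hsub : closedBall x ρ ⊆ closedBall x ε := closedBall_subset_closedBall hρε
  set h : E → ℝ := fun z => u z - ⟪p, z - x⟫ - 1/2 * ⟪A (z - x), z - x⟫ with hh
  have hderiv : ∀ z ∈ closedBall x ρ,
      HasFDerivWithinAt h (innerSL ℝ (gradient u z - p - A (z - x))) (closedBall x ρ) z := by
    intro z hz
    have hzball : z ∈ ball x δ := hcb (hsub hz)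
    have hu' : HasFDerivAt u (innerSL ℝ (gradient u z)) z := by
      have hd : DifferentiableAt ℝ u z := hdiffu z hzball
      have heq : fderiv ℝ u z = innerSL ℝ (gradient u z) := by
        ext w
        rw [innerSL_apply_apply]
        show fderiv ℝ u z w = ⟪(InnerProductSpace.toDual ℝ E).symm (fderiv ℝ u z), w⟫
        rw [InnerProductSpace.toDual_symm_apply]
      rw [← heq]
      exact hd.hasFDerivAt
    have hsb : HasFDerivAt (fun z : E => z - x) (ContinuousLinearMap.id ℝ E) z :=
      (hasFDerivAt_id z).sub_const x
    have hl : HasFDerivAt (fun z : E => ⟪p, z - x⟫) (innerSL ℝ p) z := by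
      simpa [Function.comp_def] using ((innerSL ℝ p).hasFDerivAt.comp z hsb)
    have hA' : HasFDerivAt (fun z : E => A (z - x)) A z := by
      simpa [Function.comp_def] using A.hasFDerivAt.comp z hsb
    have hq := (hA'.inner ℝ hsb).const_mul (1/2 : ℝ)
    have hcomb := (hu'.sub hl).sub hq
    have hDeq : innerSL ℝ (gradient u z) - innerSL ℝ p - (1/2 : ℝ) •
        ((fderivInnerCLM ℝ (A (z - x), z - x)).comp (A.prod (ContinuousLinearMap.id ℝ E)))
        = innerSL ℝ (gradient u z - p - A (z - x)) := by
      ext w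
      simp only [ContinuousLinearMap.sub_apply, ContinuousLinearMap.smul_apply,
        ContinuousLinearMap.coe_comp', Function.comp_apply, ContinuousLinearMap.prod_apply,
        ContinuousLinearMap.coe_id', id_eq, fderivInnerCLM_apply, innerSL_apply_apply,
        inner_sub_left, smul_eq_mul]
      have := hsymm (z - x) w
      linarith
    rw [← hDeq]
    exact hcomb.hasFDerivWithinAt
  have hbound : ∀ z ∈ closedBall x ρ,
      ‖innerSL ℝ (gradient u z - p - A (z - x))‖ ≤ K₀ * ρ^2 := by
    intro z hz
    rw [innerSL_apply_norm]
    refine (hgradbound z (hsub hz)).trans ?_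
    have hzρ : ‖z - x‖ ≤ ρ := by rwa [← dist_eq_norm, ← mem_closedBall]
    exact mul_le_mul_of_nonneg_left (pow_le_pow_left₀ (norm_nonneg _) hzρ 2) K₀.2
  have key := (convex_closedBall x ρ).norm_image_sub_le_of_norm_hasFDerivWithin_le
    hderiv hbound (mem_closedBall_self hρ0) (by rw [mem_closedBall, dist_eq_norm])
  have hx0 : h x = u x := by simp [hh]
  rw [hx0, Real.norm_eq_abs] at key
  have heq2 : u y - u x - ⟪p, y - x⟫ - 1/2 * ⟪A (y - x), y - x⟫ = h y - u x := by
    rw [hh]; ring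
  rw [heq2]
  calc |h y - u x| ≤ K₀ * ρ^2 * ‖y - x‖ := key
  _ = K₀ * ‖y - x‖^3 := by rw [← hρ]; ring

theorem minmax_scheme_consistency_inf_laplacian
    {n : ℕ} (u : EuclideanSpace ℝ (Fin n) → ℝ)
    (x : EuclideanSpace ℝ (Fin n))
    (hu : ContDiffAt ℝ 3 u x)
    (hgrad : gradient u x ≠ 0) :
    (fun r : ℝ =>
        (sSup (u '' Metric.sphere x r) + sInf (u '' Metric.sphere x r)) / 2
          - u x
          - r ^ 2 / 2 *
              ((‖gradient u x‖ ^ 2)⁻¹ *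
                ⟪fderiv ℝ (gradient u) x (gradient u x), gradient u x⟫))
      =O[nhdsWithin 0 (Set.Ioi 0)] fun r : ℝ => r ^ 3 := by
  haveI : Nontrivial (EuclideanSpace ℝ (Fin n)) := nontrivial_of_ne _ _ hgrad
  have hc0 : (0:ℝ) < ‖gradient u x‖ := norm_pos_iff.2 hgrad
  obtain ⟨K, ε, hε0, hK0, hcontu, htay⟩ := taylor_cubic_bound u x hu
  rw [Asymptotics.isBigO_iff]
  refine ⟨K + 2*‖fderiv ℝ (gradient u) x‖^2/‖gradient u x‖, ?_⟩
  filter_upwards [Ioc_mem_nhdsGT_of_mem (Set.mem_Ico.mpr ⟨le_refl (0:ℝ), hε0⟩)] with r hr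
  obtain ⟨hr0, hrε⟩ := hr
  have hr3 : (0:ℝ) < r^3 := by positivity
  have hsph_sub : Metric.sphere x r ⊆ Metric.closedBall x ε :=
    Metric.sphere_subset_closedBall.trans (Metric.closedBall_subset_closedBall hrε)
  have hnormyx : ∀ y ∈ Metric.sphere x r, ‖y - x‖ = r := fun y hy => by
    rw [← dist_eq_norm]; exact Metric.mem_sphere.1 hy
  -- pointwise upper bound on the sphere
  have hptU : ∀ y ∈ Metric.sphere x r,
      u y ≤ u x + r*‖gradient u x‖ + r^2/2 * ((‖gradient u x‖^2)⁻¹ *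
        ⟪fderiv ℝ (gradient u) x (gradient u x), gradient u x⟫)
        + (K + 2*‖fderiv ℝ (gradient u) x‖^2/‖gradient u x‖) * r^3 := by
    intro y hy
    have hyx := hnormyx y hy
    have h1 := (abs_le.1 (htay y (hsph_sub hy))).2
    rw [hyx] at h1
    have h2 := sphere_quad_bound (gradient u x) (fderiv ℝ (gradient u) x) hr0 hgrad hyx
    linarith
  -- pointwise lower bound on the sphere
  have hptL : ∀ y ∈ Metric.sphere x r,
      u x - r*‖gradient u x‖ + r^2/2 * ((‖gradient u x‖^2)⁻¹ *
        ⟪fderiv ℝ (gradient u) x (gradient u x), gradient u x⟫)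
        - (K + 2*‖fderiv ℝ (gradient u) x‖^2/‖gradient u x‖) * r^3 ≤ u y := by
    intro y hy
    have hyx := hnormyx y hy
    have h1 := (abs_le.1 (htay y (hsph_sub hy))).1
    rw [hyx] at h1
    have h2 := sphere_quad_bound (-(gradient u x)) (-(fderiv ℝ (gradient u) x)) hr0
      (neg_ne_zero.2 hgrad) hyx
    simp only [norm_neg, inner_neg_left, inner_neg_right, ContinuousLinearMap.neg_apply,
      map_neg, neg_neg] at h2
    linarith
  -- the special points
  set w₀ := (r / ‖gradient u x‖) • gradient u x with hw₀
  have hw₀norm : ‖w₀‖ = r := by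
    rw [hw₀, norm_smul, Real.norm_eq_abs, abs_of_pos (div_pos hr0 hc0)]
    field_simp
  have hy₀mem : x + w₀ ∈ Metric.sphere x r := by
    rw [mem_sphere_iff_norm, add_sub_cancel_left]; exact hw₀norm
  have hy₁mem : x - w₀ ∈ Metric.sphere x r := by
    rw [mem_sphere_iff_norm, sub_sub_cancel_left, norm_neg]; exact hw₀norm
  have hinner1 : ⟪gradient u x, w₀⟫ = r * ‖gradient u x‖ := by
    rw [hw₀, real_inner_smul_right, real_inner_self_eq_norm_sq]
    field_simp
  have hinner2 : ⟪fderiv ℝ (gradient u) x w₀, w₀⟫ = r^2 * (‖gradient u x‖^2)⁻¹ *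
      ⟪fderiv ℝ (gradient u) x (gradient u x), gradient u x⟫ := by
    rw [hw₀, map_smul, real_inner_smul_left, real_inner_smul_right]
    field_simp
  have htay₀ := (abs_le.1 (htay (x + w₀) (hsph_sub hy₀mem))).1
  rw [add_sub_cancel_left, hw₀norm, hinner1, hinner2] at htay₀
  have htay₁ := (abs_le.1 (htay (x - w₀) (hsph_sub hy₁mem))).2
  simp only [sub_sub_cancel_left, norm_neg, inner_neg_right, map_neg, inner_neg_neg,
    ContinuousLinearMap.neg_apply, inner_neg_left, neg_neg, hw₀norm, hinner1,
    hinner2] at htay₁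
  -- sup and inf facts
  have hcomp : IsCompact (u '' Metric.sphere x r) :=
    (isCompact_sphere x r).image_of_continuousOn (hcontu.mono hsph_sub)
  have hne' : (u '' Metric.sphere x r).Nonempty :=
    (NormedSpace.sphere_nonempty.2 hr0.le).image u
  have hSle := csSup_le hne' (by rintro _ ⟨y, hy, rfl⟩; exact hptU y hy)
  have hleS := le_csSup hcomp.bddAbove (Set.mem_image_of_mem u hy₀mem)
  have hIle := csInf_le hcomp.bddBelow (Set.mem_image_of_mem u hy₁mem)
  have hleI := le_csInf hne' (by rintro _ ⟨y, hy, rfl⟩; exact hptL y hy)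
  have hC₁ : 0 ≤ 2*‖fderiv ℝ (gradient u) x‖^2/‖gradient u x‖ * r^3 := by positivity
  simp only [Real.norm_eq_abs]
  rw [abs_of_pos hr3, abs_le]
  constructor
  · linarith
  · linarith
end

section
/- Location of extrema on small spheres: Let u : ℝⁿ → ℝ be three times continuously differentiable on a neighborhood of a point x with ∇u(x) ≠ 0. Then, as r → 0⁺, every maximizer y⁺_r of u over the sphere {y : |y − x| = r} satisfies |y⁺_r − (x + r ∇u(x)/|∇u(x)|)| = O(r²), and every minimizer y⁻_r satisfies |y⁻_r − (x − r ∇u(x)/|∇u(x)|)| = O(r²). -/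
open Metric Filter Topology RealInnerProductSpace

lemma taylor2 {E : Type*} [NormedAddCommGroup E] [NormedSpace ℝ E]
    (u : E → ℝ) (x : E) (hu : ContDiffAt ℝ 3 u x) :
    ∃ K ρ : ℝ, 0 < K ∧ 0 < ρ ∧ ∀ h : E, ‖h‖ ≤ ρ →
      |u (x + h) - u x - fderiv ℝ u x h
          - (1/2) * fderiv ℝ (fderiv ℝ u) x h h| ≤ K * ‖h‖ ^ 3 := by
  set g₁ := fderiv ℝ u with hg₁
  set B := fderiv ℝ g₁ x with hBdef
  have h2 : ContDiffAt ℝ 2 g₁ x := hu.fderiv_right (by norm_num)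
  have h1 : ContDiffAt ℝ 1 (fderiv ℝ g₁) x := h2.fderiv_right (by norm_num)
  obtain ⟨K, t, ht, hlip⟩ := h1.exists_lipschitzOnWith
  have hev : ∀ᶠ y in 𝓝 x, ContDiffAt ℝ 3 u y := hu.eventually (by norm_num)
  obtain ⟨ρ, hρ, hsub⟩ := Metric.mem_nhds_iff.1 (Filter.inter_mem ht hev)
  have hxball : x ∈ ball x ρ := mem_ball_self hρ
  have hxt : x ∈ t := (hsub hxball).1
  have hcd : ∀ y ∈ ball x ρ, ContDiffAt ℝ 3 u y := fun y hy => (hsub hy).2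
  have hud : ∀ y ∈ ball x ρ, HasFDerivAt u (g₁ y) y := fun y hy =>
    ((hcd y hy).differentiableAt (by norm_num)).hasFDerivAt
  have hg1d : ∀ y ∈ ball x ρ, HasFDerivAt g₁ (fderiv ℝ g₁ y) y := by
    intro y hy
    have h2y : ContDiffAt ℝ 2 g₁ y := (hcd y hy).fderiv_right (by norm_num : (2:WithTop ℕ∞)+1 ≤ 3)
    exact (h2y.differentiableAt (by norm_num)).hasFDerivAt
  have hlipK : ∀ y ∈ ball x ρ, ‖fderiv ℝ g₁ y - B‖ ≤ (K : ℝ) * ‖y - x‖ := by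
    intro y hy
    have := hlip.dist_le_mul y ((hsub hy).1) x hxt
    rwa [dist_eq_norm, dist_eq_norm] at this
  have hseg : ∀ (y z : E), z ∈ segment ℝ x y → ‖z - x‖ ≤ ‖y - x‖ := by
    intro y z hz
    rw [segment_eq_image'] at hz
    obtain ⟨θ, ⟨h0, h1'⟩, rfl⟩ := hz
    simp only [add_sub_cancel_left, norm_smul, Real.norm_eq_abs, abs_of_nonneg h0]
    nlinarith [norm_nonneg (y - x)]
  have haff : ∀ z : E, HasFDerivAt (fun z => B (z - x)) B z := by
    intro z
    have h' := B.hasFDerivAt.comp z ((hasFDerivAt_id z).sub_const x)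
    rw [ContinuousLinearMap.comp_id] at h'
    exact h'
  have step1 : ∀ y ∈ ball x ρ, ‖g₁ y - g₁ x - B (y - x)‖ ≤ (K : ℝ) * ‖y - x‖ ^ 2 := by
    intro y hy
    have hsegsub : segment ℝ x y ⊆ ball x ρ := (convex_ball x ρ).segment_subset hxball hy
    have hG : ∀ z ∈ segment ℝ x y,
        HasFDerivWithinAt (fun z => g₁ z - B (z - x)) (fderiv ℝ g₁ z - B) (segment ℝ x y) z :=
      fun z hz => ((hg1d z (hsegsub hz)).sub (haff z)).hasFDerivWithinAt
    have hbound : ∀ z ∈ segment ℝ x y, ‖fderiv ℝ g₁ z - B‖ ≤ (K : ℝ) * ‖y - x‖ := by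
      intro z hz
      refine le_trans (hlipK z (hsegsub hz)) ?_
      have := hseg y z hz
      gcongr
    have := (convex_segment x y).norm_image_sub_le_of_norm_hasFDerivWithin_le hG hbound
      (left_mem_segment ℝ x y) (right_mem_segment ℝ x y)
    simp only [sub_self, map_zero, sub_zero] at this
    calc ‖g₁ y - g₁ x - B (y - x)‖ = ‖g₁ y - B (y - x) - g₁ x‖ := by rw [sub_right_comm]
      _ ≤ (K : ℝ) * ‖y - x‖ * ‖y - x‖ := this
      _ = (K : ℝ) * ‖y - x‖ ^ 2 := by ring
  have hsymm : ∀ v w, B v w = B w v := fun v w => (hu.isSymmSndFDerivAt (by norm_num)) v w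
  have hFd : ∀ z ∈ ball x ρ, HasFDerivAt
      (fun z => u z - g₁ x (z - x) - (1/2 : ℝ) * B (z - x) (z - x))
      (g₁ z - g₁ x - B (z - x)) z := by
    intro z hz
    have hlin : HasFDerivAt (fun z => g₁ x (z - x)) (g₁ x) z := by
      have h' := (g₁ x).hasFDerivAt.comp z ((hasFDerivAt_id z).sub_const x)
      rw [ContinuousLinearMap.comp_id] at h'
      exact h'
    have hw : HasFDerivAt (fun z : E => z - x) (ContinuousLinearMap.id ℝ E) z :=
      (hasFDerivAt_id z).sub_const x
    have hq : HasFDerivAt (fun z => B (z - x) (z - x))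
        ((B (z - x)).comp (ContinuousLinearMap.id ℝ E) + B.flip (z - x)) z :=
      (haff z).clm_apply hw
    have hq2 := hq.const_mul (1/2 : ℝ)
    have := ((hud z hz).sub hlin).sub hq2
    refine HasFDerivAt.congr_fderiv this ?_
    ext v
    simp only [ContinuousLinearMap.sub_apply, ContinuousLinearMap.smul_apply,
      ContinuousLinearMap.add_apply, ContinuousLinearMap.comp_apply,
      ContinuousLinearMap.coe_id', id_def, ContinuousLinearMap.flip_apply, smul_eq_mul]
    rw [hsymm v (z - x)]
    ring
  refine ⟨(K : ℝ) + 1, ρ/2, by positivity, by positivity, ?_⟩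
  intro h hh
  have hx1 : x + h ∈ ball x ρ := by
    rw [mem_ball, dist_eq_norm, add_sub_cancel_left]
    linarith
  have hsegsub : segment ℝ x (x+h) ⊆ ball x ρ := (convex_ball _ _).segment_subset hxball hx1
  have hbound : ∀ z ∈ segment ℝ x (x+h), ‖g₁ z - g₁ x - B (z - x)‖ ≤ (K : ℝ) * ‖h‖ ^ 2 := by
    intro z hz
    refine le_trans (step1 z (hsegsub hz)) ?_
    have := hseg (x+h) z hz
    rw [add_sub_cancel_left] at this
    gcongr
  have hmv := (convex_segment x (x+h)).norm_image_sub_le_of_norm_hasFDerivWithin_le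
    (fun z hz => (hFd z (hsegsub hz)).hasFDerivWithinAt) hbound
    (left_mem_segment ℝ x (x+h)) (right_mem_segment ℝ x (x+h))
  rw [add_sub_cancel_left] at hmv
  simp only [sub_self, map_zero, mul_zero, sub_zero] at hmv
  calc |u (x + h) - u x - g₁ x h - (1/2 : ℝ) * B h h|
      = ‖u (x + h) - g₁ x h - (1/2 : ℝ) * B h h - u x‖ := by
        rw [Real.norm_eq_abs]; congr 1; ring
    _ ≤ (K : ℝ) * ‖h‖ ^ 2 * ‖h‖ := hmv
    _ ≤ ((K : ℝ) + 1) * ‖h‖ ^ 3 := by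
        have := norm_nonneg h
        nlinarith [norm_nonneg h, sq_nonneg ‖h‖]


lemma quad_bound {t A Bc r : ℝ} (ht : 0 ≤ t) (hA : 0 ≤ A) (hB : 0 ≤ Bc) (hr : 0 < r)
    (h : t^2 ≤ A*r^4 + Bc*r^2*t) : t ≤ (Bc + Real.sqrt A) * r^2 := by
  by_contra hc
  push_neg at hc
  have hs := Real.sq_sqrt hA
  have h1 : Real.sqrt A * r^2 ≤ t := by nlinarith [Real.sqrt_nonneg A, sq_nonneg r]
  have h0 : 0 ≤ Real.sqrt A * r^2 := by positivity
  have htpos : 0 < t := lt_of_le_of_lt (by positivity) hc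
  have k1 : (Real.sqrt A * r^2)^2 ≤ (Real.sqrt A * r^2) * t := by
    rw [sq]; exact mul_le_mul_of_nonneg_left h1 h0
  have k2 : (Bc + Real.sqrt A) * r^2 * t < t * t := mul_lt_mul_of_pos_right hc htpos
  have k3 : (Real.sqrt A * r^2)^2 = A * r^4 := by rw [mul_pow, hs]; ring
  nlinarith [k1, k2, k3]

lemma core_est {E : Type*} [NormedAddCommGroup E] [InnerProductSpace ℝ E]
    (g h : E) (r K M σ : ℝ) (hσ : σ * σ = 1)
    (hg : g ≠ 0) (hr : 0 < r) (hh : ‖h‖ = r) (hK : 0 ≤ K) (hM : 0 ≤ M)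
    (hineq : r * ‖g‖ - 2*K*r^3 - M*r*‖h - (σ*r) • (‖g‖⁻¹ • g)‖ ≤ σ * ⟪g, h⟫) :
    ‖h - (σ*r) • (‖g‖⁻¹ • g)‖ ≤ (2*M/‖g‖ + Real.sqrt (4*K/‖g‖)) * r^2 := by
  set G := ‖g‖ with hG
  have hGpos : 0 < G := norm_pos_iff.mpr hg
  set t := ‖h - (σ*r) • (G⁻¹ • g)‖ with htdef
  have hsq : t^2 = 2*r^2 - 2*σ*r*G⁻¹*⟪g, h⟫ := by
    have e1 : ⟪h, (σ*r) • (G⁻¹ • g)⟫ = σ*r*G⁻¹*⟪g, h⟫ := by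
      rw [real_inner_smul_right, real_inner_smul_right, real_inner_comm]
      ring
    have e2 : ‖(σ*r) • (G⁻¹ • g)‖^2 = r^2 := by
      rw [norm_smul, norm_smul, Real.norm_eq_abs, Real.norm_eq_abs, abs_inv, abs_of_nonneg hGpos.le]
      rw [mul_pow, mul_pow, sq_abs]
      field_simp
      nlinarith
    rw [htdef, norm_sub_sq_real, e1, e2, hh]
    ring
  have hG1 : G⁻¹ * G = 1 := inv_mul_cancel₀ hGpos.ne'
  have hineq2 : t^2 ≤ (4*K/G)*r^4 + (2*M/G)*r^2*t := by
    rw [hsq]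
    have h3 : 2*r*G⁻¹*(r * G - 2*K*r^3 - M*r*t) ≤ 2*r*G⁻¹*(σ * ⟪g, h⟫) := by
      apply mul_le_mul_of_nonneg_left hineq
      positivity
    have expand : 2*r*G⁻¹*(r * G - 2*K*r^3 - M*r*t) = 2*r^2 - (4*K/G)*r^4 - (2*M/G)*r^2*t := by
      field_simp
      ring
    nlinarith
  exact quad_bound (norm_nonneg _) (by positivity) (by positivity) hr hineq2

/-!
STATEMENT 16: Location of extrema of `u` on small spheres.

For `u : ℝⁿ → ℝ` three times continuously differentiable near `x` with
`∇u(x) ≠ 0`, there exist `C, r₀ > 0` such that for all `0 < r < r₀`: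
every maximizer `y⁺` of `u` on the sphere `{y : |y - x| = r}` satisfies
`|y⁺ - (x + r ∇u(x)/|∇u(x)|)| ≤ C r²`, and every minimizer `y⁻` satisfies
`|y⁻ - (x - r ∇u(x)/|∇u(x)|)| ≤ C r²`.
-/

set_option maxHeartbeats 1000000 in
theorem extrema_location_on_spheres
    {n : ℕ} (u : EuclideanSpace ℝ (Fin n) → ℝ)
    (x : EuclideanSpace ℝ (Fin n))
    (hu : ContDiffAt ℝ 3 u x)
    (hgrad : gradient u x ≠ 0) :
    ∃ C r₀ : ℝ, 0 < C ∧ 0 < r₀ ∧ ∀ r : ℝ, 0 < r → r < r₀ →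
      (∀ y ∈ Metric.sphere x r, IsMaxOn u (Metric.sphere x r) y →
        ‖y - (x + r • (‖gradient u x‖⁻¹ • gradient u x))‖ ≤ C * r ^ 2) ∧
      (∀ y ∈ Metric.sphere x r, IsMinOn u (Metric.sphere x r) y →
        ‖y - (x - r • (‖gradient u x‖⁻¹ • gradient u x))‖ ≤ C * r ^ 2) := by
  obtain ⟨K, ρ, hK, hρ, hT⟩ := taylor2 u x hu
  set g := gradient u x with hgdef
  have hG : (0:ℝ) < ‖g‖ := norm_pos_iff.mpr hgrad
  set B := fderiv ℝ (fderiv ℝ u) x with hBdef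
  set M := ‖B‖ with hMdef
  have hM : (0:ℝ) ≤ M := by rw [hMdef]; exact norm_nonneg B
  have hinner : ∀ v : EuclideanSpace ℝ (Fin n), fderiv ℝ u x v = ⟪g, v⟫ := by
    intro v
    rw [hgdef, gradient]
    exact (InnerProductSpace.toDual_symm_apply).symm
  have hBnd : ∀ a b : EuclideanSpace ℝ (Fin n), |B a b| ≤ M * ‖a‖ * ‖b‖ := by
    intro a b
    calc |B a b| ≤ ‖B a‖ * ‖b‖ := (B a).le_opNorm b
      _ ≤ M * ‖a‖ * ‖b‖ := by
          have h1 := B.le_opNorm a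
          have := norm_nonneg b
          exact mul_le_mul_of_nonneg_right h1 this
  have hgu : ‖(‖g‖⁻¹ • g)‖ = 1 := by
    rw [norm_smul, Real.norm_eq_abs, abs_inv, abs_of_nonneg hG.le, inv_mul_cancel₀ hG.ne']
  set C := 2*M/‖g‖ + Real.sqrt (4*K/‖g‖) + 1 with hCdef
  have hCpos : 0 < C := by positivity
  refine ⟨C, ρ, hCpos, hρ, ?_⟩
  intro r hr hrρ
  have hrρ' : r ≤ ρ := hrρ.le
  have key : ∀ σ : ℝ, σ = 1 ∨ σ = -1 → ∀ y ∈ Metric.sphere x r,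
      (∀ z ∈ Metric.sphere x r, σ * u z ≤ σ * u y) →
      ‖y - (x + (σ*r) • (‖g‖⁻¹ • g))‖ ≤ C * r^2 := by
    intro σ hσ1 y hy hmax
    have hσσ : σ * σ = 1 := by rcases hσ1 with h|h <;> rw [h] <;> norm_num
    have hσabs : |σ| = 1 := by rcases hσ1 with h|h <;> rw [h] <;> norm_num
    set h := y - x with hhdef
    have hxh : x + h = y := by rw [hhdef]; abel
    have hhn : ‖h‖ = r := by
      rw [hhdef, ← dist_eq_norm]; exact mem_sphere.mp hy
    set k := (σ*r) • (‖g‖⁻¹ • g) with hkdef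
    have hkn : ‖k‖ = r := by
      rw [hkdef, norm_smul, hgu, Real.norm_eq_abs, abs_mul, hσabs, abs_of_nonneg hr.le]; ring
    have hzs : x + k ∈ Metric.sphere x r := by
      rw [mem_sphere, dist_eq_norm, add_sub_cancel_left, hkn]
    have hcomp : σ * u (x + k) ≤ σ * u (x + h) := by rw [hxh]; exact hmax _ hzs
    have Th := hT h (by rw [hhn]; exact hrρ')
    have Tk := hT k (by rw [hkn]; exact hrρ')
    rw [hhn, abs_le, hinner h] at Th
    rw [hkn, abs_le, hinner k] at Tk
    have fk : ⟪g, k⟫ = σ * (r * ‖g‖) := by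
      rw [hkdef, real_inner_smul_right, real_inner_smul_right,
        real_inner_self_eq_norm_mul_norm]
      field_simp
    rw [fk] at Tk
    set t := ‖h - k‖ with htdef
    have e1 : B h (h - k) = B h h - B h k := map_sub _ _ _
    have e2 : B (h - k) k = B h k - B k k := by
      rw [map_sub B h k]; simp
    have b1 := hBnd h (h - k)
    have b2 := hBnd (h - k) k
    rw [hhn] at b1
    rw [hkn] at b2
    have hBdiff : |B h h - B k k| ≤ 2*(M*r*t) := by
      calc |B h h - B k k| = |B h (h-k) + B (h-k) k| := by rw [e1, e2]; congr 1; ring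
        _ ≤ |B h (h-k)| + |B (h-k) k| := abs_add_le _ _
        _ ≤ M * r * ‖h - k‖ + M * ‖h - k‖ * r := add_le_add b1 b2
        _ = 2*(M*r*t) := by rw [← htdef]; ring
    rw [abs_le] at hBdiff
    have hineq : r * ‖g‖ - 2*K*r^3 - M*r*t ≤ σ * ⟪g, h⟫ := by
      rcases hσ1 with hs|hs <;> subst hs
      · simp only [one_mul] at hcomp ⊢
        linarith [Th.1, Th.2, Tk.1, Tk.2, hBdiff.1, hBdiff.2, hcomp]
      · simp only [neg_one_mul] at hcomp ⊢
        linarith [Th.1, Th.2, Tk.1, Tk.2, hBdiff.1, hBdiff.2, hcomp]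
    have hcore := core_est g h r K M σ hσσ hgrad hr hhn hK.le hM hineq
    have hgoal : y - (x + k) = h - k := by rw [hhdef]; abel
    rw [hgoal]
    calc ‖h - k‖ ≤ (2*M/‖g‖ + Real.sqrt (4*K/‖g‖)) * r^2 := hcore
      _ ≤ C * r^2 := by
          rw [hCdef]
          have h2 : (0:ℝ) ≤ r^2 := sq_nonneg r
          nlinarith
  constructor
  · intro y hy hmax
    have := key 1 (Or.inl rfl) y hy (fun z hz => by
      have := isMaxOn_iff.mp hmax z hz
      linarith)
    rw [one_mul] at this
    exact this
  · intro y hy hmin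
    have := key (-1) (Or.inr rfl) y hy (fun z hz => by
      have := isMinOn_iff.mp hmin z hz
      linarith)
    rw [neg_one_mul, neg_smul, ← sub_eq_add_neg] at this
    exact this
end

section
/- Consistency of the wide-stencil scheme for the smallest Hessian eigenvalue: Let u : ℝⁿ → ℝ be four times continuously differentiable on a neighborhood of a point x. Then, as h → 0⁺, min_{|v|=1} ( u(x + hv) − 2u(x) + u(x − hv) ) / h² = λ₁(D²u(x)) + O(h²), where λ₁(D²u(x)) denotes the smallest eigenvalue of the Hessian matrix D²u(x). -/
/-!
STATEMENT 17: Consistency of the wide-stencil scheme for the smallest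
eigenvalue of the Hessian.

For `u : ℝⁿ → ℝ` (with `n ≥ 1`, so that the unit sphere is nonempty) four
times continuously differentiable near `x`, as `h → 0⁺`,
`min_{|v|=1} (u(x+hv) - 2u(x) + u(x-hv))/h² = λ₁(D²u(x)) + O(h²)`.
Here `D²u(x) = fderiv ℝ (gradient u) x` is the Hessian and
`λ₁(D²u(x)) = min_{|v|=1} ⟨D²u(x) v, v⟩` is its smallest eigenvalue (via
the Rayleigh quotient characterization for symmetric matrices); the minima
over the compact unit sphere are expressed as `sInf` of the corresponding
sets of values.
-/

open RealInnerProductSpace Asymptotics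

/-- Derivative of a function along a line. -/
lemma aux_line_deriv {E F : Type*} [NormedAddCommGroup E] [NormedSpace ℝ E]
    [NormedAddCommGroup F] [NormedSpace ℝ F]
    (g : E → F) (x w : E) (t : ℝ) (hg : DifferentiableAt ℝ g (x + t • w)) :
    HasDerivAt (fun s : ℝ => g (x + s • w)) (fderiv ℝ g (x + t • w) w) t := by
  have h1 : HasDerivAt (fun s : ℝ => x + s • w) w t := by
    simpa using ((hasDerivAt_id t).smul_const w).const_add x
  exact hg.hasFDerivAt.comp_hasDerivAt t h1

/-- Mean value inequality for a function vanishing at `0`. -/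
lemma aux_mvt {F : Type*} [NormedAddCommGroup F] [NormedSpace ℝ F]
    {g g' : ℝ → F} {h B : ℝ}
    (hg : ∀ t ∈ Set.Icc (0 : ℝ) h, HasDerivAt g (g' t) t)
    (h0 : g 0 = 0)
    (hb : ∀ t ∈ Set.Ico (0 : ℝ) h, ‖g' t‖ ≤ B) :
    ∀ t ∈ Set.Icc (0 : ℝ) h, ‖g t‖ ≤ B * t := by
  intro t ht
  have := norm_image_sub_le_of_norm_deriv_le_segment'
    (fun s hs => (hg s hs).hasDerivWithinAt) hb t ht
  simpa [h0] using this

/-- Comparison of two `sInf`s over a parameterized family. -/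
lemma aux_sInf_comp {α : Type*} (P : α → Prop) (f g : α → ℝ) (C m : ℝ)
    (hne : ∃ a, P a)
    (hfg : ∀ a, P a → |f a - g a| ≤ C)
    (hgm : ∀ a, P a → m ≤ g a) :
    |sInf {t | ∃ a, P a ∧ t = f a} - sInf {t | ∃ a, P a ∧ t = g a}| ≤ C := by
  obtain ⟨a₀, ha₀⟩ := hne
  have hBne : Set.Nonempty {t | ∃ a, P a ∧ t = g a} := ⟨g a₀, a₀, ha₀, rfl⟩
  have hAne : Set.Nonempty {t | ∃ a, P a ∧ t = f a} := ⟨f a₀, a₀, ha₀, rfl⟩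
  have hBbdd : BddBelow {t | ∃ a, P a ∧ t = g a} := by
    refine ⟨m, ?_⟩; rintro t ⟨a, ha, rfl⟩; exact hgm a ha
  have hAbdd : BddBelow {t | ∃ a, P a ∧ t = f a} := by
    refine ⟨m - C, ?_⟩; rintro t ⟨a, ha, rfl⟩
    have h1 := abs_le.1 (hfg a ha); have h2 := hgm a ha
    linarith [h1.1, h1.2]
  have h1 : sInf {t | ∃ a, P a ∧ t = f a} ≤ sInf {t | ∃ a, P a ∧ t = g a} + C := by
    rw [← sub_le_iff_le_add]
    apply le_csInf hBne
    rintro t ⟨a, ha, rfl⟩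
    have hle := csInf_le hAbdd (show f a ∈ {t | ∃ a, P a ∧ t = f a} from ⟨a, ha, rfl⟩)
    have h2 := abs_le.1 (hfg a ha)
    linarith [h2.1, h2.2]
  have h2 : sInf {t | ∃ a, P a ∧ t = g a} ≤ sInf {t | ∃ a, P a ∧ t = f a} + C := by
    rw [← sub_le_iff_le_add]
    apply le_csInf hAne
    rintro t ⟨a, ha, rfl⟩
    have hle := csInf_le hBbdd (show g a ∈ {t | ∃ a, P a ∧ t = g a} from ⟨a, ha, rfl⟩)
    have h3 := abs_le.1 (hfg a ha)
    linarith [h3.1, h3.2]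
  rw [abs_sub_le_iff]
  constructor <;> linarith

/-- Key quantitative estimate: fourth order consistency of the symmetric
second difference quotient. -/
lemma aux_key {E : Type*} [NormedAddCommGroup E] [InnerProductSpace ℝ E] [CompleteSpace E]
    (u : E → ℝ) (x : E) {r C0 : ℝ} (hC0 : 0 ≤ C0) {U : Set E}
    (hball : Metric.closedBall x r ⊆ U)
    (hud : ∀ y ∈ U, DifferentiableAt ℝ u y)
    (hgd : ∀ y ∈ U, DifferentiableAt ℝ (gradient u) y)
    (hkd : ∀ y ∈ U, DifferentiableAt ℝ (fderiv ℝ (gradient u)) y)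
    (hlip : ∀ y ∈ Metric.closedBall x r, ∀ z ∈ Metric.closedBall x r,
        ‖fderiv ℝ (fderiv ℝ (gradient u)) y - fderiv ℝ (fderiv ℝ (gradient u)) z‖
          ≤ C0 * ‖y - z‖)
    (v : E) (hv : ‖v‖ = 1) (h : ℝ) (hh : 0 < h) (hhr : h ≤ r) :
    |(u (x + h • v) - 2 * u x + u (x - h • v))
        - h ^ 2 * ⟪fderiv ℝ (gradient u) x v, v⟫| ≤ 2 * C0 * h ^ 4 := by
  have hv' : ‖-v‖ = 1 := by rw [norm_neg]; exact hv
  have hmem : ∀ (w : E), ‖w‖ = 1 → ∀ t ∈ Set.Icc (0 : ℝ) h,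
      x + t • w ∈ Metric.closedBall x r := by
    intro w hw t ht
    rw [Metric.mem_closedBall, dist_eq_norm, add_sub_cancel_left, norm_smul, hw, mul_one,
      Real.norm_eq_abs, abs_of_nonneg ht.1]
    exact le_trans ht.2 hhr
  set Kf := fderiv ℝ (gradient u) with hKf
  -- Step 1 : the function ζ
  have hζd : ∀ t ∈ Set.Icc (0 : ℝ) h,
      HasDerivAt (fun s : ℝ => Kf (x + s • v) + Kf (x + s • (-v)) - (2 : ℝ) • Kf x)
        (fderiv ℝ Kf (x + t • v) v + fderiv ℝ Kf (x + t • (-v)) (-v)) t := by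
    intro t ht
    have h1 := aux_line_deriv Kf x v t (hkd _ (hball (hmem v hv t ht)))
    have h2 := aux_line_deriv Kf x (-v) t (hkd _ (hball (hmem (-v) hv' t ht)))
    exact (h1.add h2).sub_const _
  have hζb : ∀ t ∈ Set.Ico (0 : ℝ) h,
      ‖fderiv ℝ Kf (x + t • v) v + fderiv ℝ Kf (x + t • (-v)) (-v)‖ ≤ 2 * C0 * h := by
    intro t ht
    have e1 : fderiv ℝ Kf (x + t • v) v + fderiv ℝ Kf (x + t • (-v)) (-v)
        = (fderiv ℝ Kf (x + t • v) - fderiv ℝ Kf (x + t • (-v))) v := by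
      simp [ContinuousLinearMap.sub_apply, sub_eq_add_neg]
    have e2 : x + t • v - (x + t • (-v)) = (2 * t) • v := by
      rw [smul_neg, mul_smul, two_smul]; abel
    have ht1 : t ∈ Set.Icc (0 : ℝ) h := ⟨ht.1, ht.2.le⟩
    calc ‖fderiv ℝ Kf (x + t • v) v + fderiv ℝ Kf (x + t • (-v)) (-v)‖
        = ‖(fderiv ℝ Kf (x + t • v) - fderiv ℝ Kf (x + t • (-v))) v‖ := by rw [e1]
      _ ≤ ‖fderiv ℝ Kf (x + t • v) - fderiv ℝ Kf (x + t • (-v))‖ * ‖v‖ :=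
          ContinuousLinearMap.le_opNorm _ _
      _ = ‖fderiv ℝ Kf (x + t • v) - fderiv ℝ Kf (x + t • (-v))‖ := by rw [hv, mul_one]
      _ ≤ C0 * ‖x + t • v - (x + t • (-v))‖ :=
          hlip _ (hmem v hv t ht1) _ (hmem (-v) hv' t ht1)
      _ = C0 * (2 * t) := by
          rw [e2, norm_smul, hv, mul_one, Real.norm_eq_abs,
            abs_of_nonneg (by linarith [ht.1] : (0:ℝ) ≤ 2 * t)]
      _ ≤ 2 * C0 * h := by nlinarith [ht.1, ht.2, hC0]
  have hζ0 : (fun s : ℝ => Kf (x + s • v) + Kf (x + s • (-v)) - (2 : ℝ) • Kf x) 0 = 0 := by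
    simp [two_smul]
  have hζ := aux_mvt hζd hζ0 hζb
  have hζle : ∀ t ∈ Set.Icc (0 : ℝ) h,
      ‖Kf (x + t • v) + Kf (x + t • (-v)) - (2 : ℝ) • Kf x‖ ≤ 2 * C0 * h * h := by
    intro t ht
    refine (hζ t ht).trans ?_
    have h1 : 0 ≤ 2 * C0 * h := by positivity
    nlinarith [ht.1, ht.2]
  -- Step 2 : the function η
  have hηd : ∀ t ∈ Set.Icc (0 : ℝ) h,
      HasDerivAt (fun s : ℝ => gradient u (x + s • v) - gradient u (x + s • (-v))
          - (2 * s) • (Kf x v))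
        ((Kf (x + t • v) + Kf (x + t • (-v)) - (2 : ℝ) • Kf x) v) t := by
    intro t ht
    have h1 := aux_line_deriv (gradient u) x v t (hgd _ (hball (hmem v hv t ht)))
    have h2 := aux_line_deriv (gradient u) x (-v) t (hgd _ (hball (hmem (-v) hv' t ht)))
    have h3 : HasDerivAt (fun s : ℝ => (2 * s) • (Kf x v)) ((2 : ℝ) • (Kf x v)) t := by
      simpa using ((hasDerivAt_id t).const_mul (2 : ℝ)).smul_const (Kf x v)
    have h4 := (h1.sub h2).sub h3
    refine HasDerivAt.congr_deriv h4 ?_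
    simp only [← hKf, ContinuousLinearMap.add_apply, ContinuousLinearMap.sub_apply,
      ContinuousLinearMap.smul_apply, map_neg]
    abel
  have hη0 : (fun s : ℝ => gradient u (x + s • v) - gradient u (x + s • (-v))
      - (2 * s) • (Kf x v)) 0 = 0 := by simp
  have hηb : ∀ t ∈ Set.Ico (0 : ℝ) h,
      ‖(Kf (x + t • v) + Kf (x + t • (-v)) - (2 : ℝ) • Kf x) v‖ ≤ 2 * C0 * h * h := by
    intro t ht
    calc ‖(Kf (x + t • v) + Kf (x + t • (-v)) - (2 : ℝ) • Kf x) v‖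
        ≤ ‖Kf (x + t • v) + Kf (x + t • (-v)) - (2 : ℝ) • Kf x‖ * ‖v‖ :=
          ContinuousLinearMap.le_opNorm _ _
      _ = ‖Kf (x + t • v) + Kf (x + t • (-v)) - (2 : ℝ) • Kf x‖ := by rw [hv, mul_one]
      _ ≤ 2 * C0 * h * h := hζle t ⟨ht.1, ht.2.le⟩
  have hη := aux_mvt hηd hη0 hηb
  have hηle : ∀ t ∈ Set.Icc (0 : ℝ) h,
      ‖gradient u (x + t • v) - gradient u (x + t • (-v)) - (2 * t) • (Kf x v)‖
        ≤ 2 * C0 * h * h * h := by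
    intro t ht
    refine (hη t ht).trans ?_
    have h1 : 0 ≤ 2 * C0 * h * h := by positivity
    nlinarith [ht.1, ht.2]
  -- Step 3 : the function φ
  have hgradeq : ∀ (y : E) (w : E), ⟪gradient u y, w⟫ = fderiv ℝ u y w := by
    intro y w
    exact InnerProductSpace.toDual_symm_apply
  have hφd : ∀ t ∈ Set.Icc (0 : ℝ) h,
      HasDerivAt (fun s : ℝ => u (x + s • v) + u (x + s • (-v)) - 2 * u x
          - s ^ 2 * ⟪Kf x v, v⟫)
        (⟪gradient u (x + t • v) - gradient u (x + t • (-v)) - (2 * t) • (Kf x v), v⟫) t := by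
    intro t ht
    have h1 := aux_line_deriv u x v t (hud _ (hball (hmem v hv t ht)))
    have h2 := aux_line_deriv u x (-v) t (hud _ (hball (hmem (-v) hv' t ht)))
    have h3 : HasDerivAt (fun s : ℝ => s ^ 2 * ⟪Kf x v, v⟫) (2 * t * ⟪Kf x v, v⟫) t := by
      simpa using (hasDerivAt_pow 2 t).mul_const (⟪Kf x v, v⟫)
    have h4 := ((h1.add h2).sub_const (2 * u x)).sub h3
    refine HasDerivAt.congr_deriv h4 ?_
    rw [inner_sub_left, inner_sub_left, real_inner_smul_left, hgradeq, hgradeq]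
    rw [show fderiv ℝ u (x + t • (-v)) (-v) = -(fderiv ℝ u (x + t • (-v)) v) from
      map_neg _ _]
    ring
  have hφ0 : (fun s : ℝ => u (x + s • v) + u (x + s • (-v)) - 2 * u x
      - s ^ 2 * ⟪Kf x v, v⟫) 0 = 0 := by simp; ring
  have hφb : ∀ t ∈ Set.Ico (0 : ℝ) h,
      ‖⟪gradient u (x + t • v) - gradient u (x + t • (-v)) - (2 * t) • (Kf x v), v⟫‖
        ≤ 2 * C0 * h * h * h := by
    intro t ht
    rw [Real.norm_eq_abs]
    calc |⟪gradient u (x + t • v) - gradient u (x + t • (-v)) - (2 * t) • (Kf x v), v⟫|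
        ≤ ‖gradient u (x + t • v) - gradient u (x + t • (-v)) - (2 * t) • (Kf x v)‖ * ‖v‖ :=
          abs_real_inner_le_norm _ _
      _ = ‖gradient u (x + t • v) - gradient u (x + t • (-v)) - (2 * t) • (Kf x v)‖ := by
          rw [hv, mul_one]
      _ ≤ 2 * C0 * h * h * h := hηle t ⟨ht.1, ht.2.le⟩
  have hφ := aux_mvt hφd hφ0 hφb h ⟨hh.le, le_refl h⟩
  have e3 : (u (x + h • v) - 2 * u x + u (x - h • v)) - h ^ 2 * ⟪Kf x v, v⟫
      = u (x + h • v) + u (x + h • (-v)) - 2 * u x - h ^ 2 * ⟪Kf x v, v⟫ := by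
    rw [show x + h • (-v) = x - h • v by rw [smul_neg, ← sub_eq_add_neg]]
    ring
  rw [e3]
  calc |u (x + h • v) + u (x + h • (-v)) - 2 * u x - h ^ 2 * ⟪Kf x v, v⟫|
      ≤ 2 * C0 * h * h * h * h := by
        simpa [Real.norm_eq_abs] using hφ
    _ = 2 * C0 * h ^ 4 := by ring

theorem wide_stencil_smallest_eigenvalue_consistency
    {n : ℕ} (hn : 0 < n)
    (u : EuclideanSpace ℝ (Fin n) → ℝ)
    (x : EuclideanSpace ℝ (Fin n))
    (hu : ContDiffAt ℝ 4 u x) :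
    (fun h : ℝ =>
        sInf {t : ℝ | ∃ v : EuclideanSpace ℝ (Fin n), ‖v‖ = 1 ∧
            t = (u (x + h • v) - 2 * u x + u (x - h • v)) / h ^ 2}
          - sInf {t : ℝ | ∃ v : EuclideanSpace ℝ (Fin n), ‖v‖ = 1 ∧
              t = ⟪fderiv ℝ (gradient u) x v, v⟫})
      =O[nhdsWithin 0 (Set.Ioi 0)] fun h : ℝ => h ^ 2 := by
  classical
  -- A neighborhood on which `u` is `C⁴`
  obtain ⟨U₀, hU₀, hu4₀⟩ := hu.contDiffOn le_rfl (by simp)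
  obtain ⟨U, hUsub, hUopen, hxU⟩ := mem_nhds_iff.1 hU₀
  have hu4 : ContDiffOn ℝ 4 u U := hu4₀.mono hUsub
  obtain ⟨r₀, hr₀, hball₀⟩ := Metric.isOpen_iff.1 hUopen x hxU
  set r : ℝ := r₀ / 2 with hrdef
  have hrpos : 0 < r := by positivity
  have hball : Metric.closedBall x r ⊆ U :=
    (Metric.closedBall_subset_ball (by linarith)).trans hball₀
  -- Successive derivatives
  have hGd : ContDiffOn ℝ 3 (gradient u) U := by
    have h1 : ContDiffOn ℝ 3 (fderiv ℝ u) U := hu4.fderiv_of_isOpen hUopen (by norm_num)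
    have h2 := ((InnerProductSpace.toDual ℝ (EuclideanSpace ℝ (Fin n))).symm.contDiff (n := 3)).comp_contDiffOn h1
    exact h2.congr fun y hy => rfl
  have hKd : ContDiffOn ℝ 2 (fderiv ℝ (gradient u)) U :=
    hGd.fderiv_of_isOpen hUopen (by norm_num)
  have hTd : ContDiffOn ℝ 1 (fderiv ℝ (fderiv ℝ (gradient u))) U :=
    hKd.fderiv_of_isOpen hUopen (by norm_num)
  letI : NormedAddCommGroup (EuclideanSpace ℝ (Fin n) →L[ℝ] EuclideanSpace ℝ (Fin n) →L[ℝ] EuclideanSpace ℝ (Fin n)) := inferInstance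
  letI : NormedSpace ℝ (EuclideanSpace ℝ (Fin n) →L[ℝ] EuclideanSpace ℝ (Fin n) →L[ℝ] EuclideanSpace ℝ (Fin n)) := inferInstance
  have hT'c : ContinuousOn (fderiv ℝ (fderiv ℝ (fderiv ℝ (gradient u)))) U :=
    (hTd.fderiv_of_isOpen (m := 0) hUopen (by norm_num)).continuousOn
  have hud : ∀ y ∈ U, DifferentiableAt ℝ u y := fun y hy =>
    ((hu4.differentiableOn (by norm_num)).differentiableAt (hUopen.mem_nhds hy))
  have hgd : ∀ y ∈ U, DifferentiableAt ℝ (gradient u) y := fun y hy =>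
    ((hGd.differentiableOn (by norm_num)).differentiableAt (hUopen.mem_nhds hy))
  have hkd : ∀ y ∈ U, DifferentiableAt ℝ (fderiv ℝ (gradient u)) y := fun y hy =>
    ((hKd.differentiableOn (by norm_num)).differentiableAt (hUopen.mem_nhds hy))
  have htd : ∀ y ∈ U, DifferentiableAt ℝ (fderiv ℝ (fderiv ℝ (gradient u))) y := fun y hy =>
    ((hTd.differentiableOn (by norm_num)).differentiableAt (hUopen.mem_nhds hy))
  -- Bound on the fourth derivative, hence a Lipschitz estimate for the third
  obtain ⟨C1, hC1⟩ := (isCompact_closedBall x r).exists_bound_of_continuousOn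
    (hT'c.mono hball)
  set C0 : ℝ := max C1 0 with hC0def
  have hC0 : 0 ≤ C0 := le_max_right _ _
  have hlip : ∀ y ∈ Metric.closedBall x r, ∀ z ∈ Metric.closedBall x r,
      ‖fderiv ℝ (fderiv ℝ (gradient u)) y - fderiv ℝ (fderiv ℝ (gradient u)) z‖
        ≤ C0 * ‖y - z‖ := by
    intro y hy z hz
    exact (convex_closedBall x r).norm_image_sub_le_of_norm_fderiv_le
      (fun w hw => htd w (hball hw))
      (fun w hw => le_trans (hC1 w hw) (le_max_left _ _)) hz hy
  -- Lower bound on the Rayleigh quotient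
  have hQm : ∀ v : EuclideanSpace ℝ (Fin n), ‖v‖ = 1 →
      -(‖fderiv ℝ (gradient u) x‖) ≤ ⟪fderiv ℝ (gradient u) x v, v⟫ := by
    intro v hv
    have h1 : |⟪fderiv ℝ (gradient u) x v, v⟫| ≤ ‖fderiv ℝ (gradient u) x‖ := by
      calc |⟪fderiv ℝ (gradient u) x v, v⟫|
          ≤ ‖fderiv ℝ (gradient u) x v‖ * ‖v‖ := abs_real_inner_le_norm _ _
        _ ≤ (‖fderiv ℝ (gradient u) x‖ * ‖v‖) * ‖v‖ := by
            gcongr; exact ContinuousLinearMap.le_opNorm _ _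
        _ = ‖fderiv ℝ (gradient u) x‖ := by rw [hv]; ring
    linarith [abs_le.1 h1 |>.1]
  -- The unit sphere is nonempty
  have hne : ∃ v : EuclideanSpace ℝ (Fin n), ‖v‖ = 1 := by
    refine ⟨EuclideanSpace.single (⟨0, hn⟩ : Fin n) (1 : ℝ), ?_⟩
    simp [EuclideanSpace.norm_single]
  -- Conclusion
  rw [isBigO_iff]
  refine ⟨2 * C0, ?_⟩
  filter_upwards [Ioo_mem_nhdsGT_of_mem (Set.mem_Ico.2 ⟨le_refl (0:ℝ), hrpos⟩)] with h hh
  have hhpos : 0 < h := hh.1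
  have hhr : h ≤ r := hh.2.le
  have hkey : ∀ v : EuclideanSpace ℝ (Fin n), ‖v‖ = 1 →
      |(u (x + h • v) - 2 * u x + u (x - h • v)) / h ^ 2
        - ⟪fderiv ℝ (gradient u) x v, v⟫| ≤ 2 * C0 * h ^ 2 := by
    intro v hv
    have hk := aux_key u x hC0 hball hud hgd hkd hlip v hv h hhpos hhr
    have e1 : (u (x + h • v) - 2 * u x + u (x - h • v)) / h ^ 2
        - ⟪fderiv ℝ (gradient u) x v, v⟫
        = ((u (x + h • v) - 2 * u x + u (x - h • v))
            - h ^ 2 * ⟪fderiv ℝ (gradient u) x v, v⟫) / h ^ 2 := by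
      field_simp
    rw [e1, abs_div, abs_of_pos (by positivity : (0:ℝ) < h ^ 2),
      div_le_iff₀ (by positivity : (0:ℝ) < h ^ 2)]
    calc |(u (x + h • v) - 2 * u x + u (x - h • v))
          - h ^ 2 * ⟪fderiv ℝ (gradient u) x v, v⟫|
        ≤ 2 * C0 * h ^ 4 := hk
      _ = 2 * C0 * h ^ 2 * h ^ 2 := by ring
  have hmain := aux_sInf_comp (fun v : EuclideanSpace ℝ (Fin n) => ‖v‖ = 1)
    (fun v => (u (x + h • v) - 2 * u x + u (x - h • v)) / h ^ 2)
    (fun v => ⟪fderiv ℝ (gradient u) x v, v⟫)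
    (2 * C0 * h ^ 2) (-(‖fderiv ℝ (gradient u) x‖)) hne hkey hQm
  rw [Real.norm_eq_abs, Real.norm_eq_abs, abs_of_pos (by positivity : (0:ℝ) < h ^ 2)]
  calc |sInf {t : ℝ | ∃ v : EuclideanSpace ℝ (Fin n), ‖v‖ = 1 ∧
            t = (u (x + h • v) - 2 * u x + u (x - h • v)) / h ^ 2}
          - sInf {t : ℝ | ∃ v : EuclideanSpace ℝ (Fin n), ‖v‖ = 1 ∧
              t = ⟪fderiv ℝ (gradient u) x v, v⟫}|
      ≤ 2 * C0 * h ^ 2 := hmain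
    _ = 2 * C0 * h ^ 2 := rfl
end
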